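/- arXiv:1211.2339 — 4 statements merged into one kernel-verified Lean document; each statement's English description precedes it below -/
import Mathlib

section
/- Let X be a complex Banach space with open unit ball B, let S be a finite rank bounded linear operator on X such that P = I - S has norm one, and let φ be a character in the fiber M₀(B) of the spectrum of A_u(B) over 0. Then for every f ∈ A_u(B), the Gelfand transforms satisfy f̂(φ) = (f ∘ P)^(φ), i.e. φ(f) = φ(f ∘ P). -/
open Metric Filter Topology

namespace ClusterValue

variable (X : Type*) [NormedAddCommGroup X] [NormedSpace ℂ X]

/-- Membership in `A_u(B)`: analytic on the open unit ball, bounded there,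
and uniformly continuous there. -/
def MemAu (f : X → ℂ) : Prop :=
  AnalyticOn ℂ f (ball (0 : X) 1) ∧ (∃ C : ℝ, ∀ x ∈ ball (0 : X) 1, ‖f x‖ ≤ C) ∧
    UniformContinuousOn f (ball (0 : X) 1)

/-- Membership in `H^∞(B)`: analytic on the open unit ball and bounded there. -/
def MemHinf (f : X → ℂ) : Prop :=
  AnalyticOn ℂ f (ball (0 : X) 1) ∧ (∃ C : ℝ, ∀ x ∈ ball (0 : X) 1, ‖f x‖ ≤ C)

/-- A character (nonzero continuous multiplicative linear functional) of the algebra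
of functions on the open unit ball of `X` determined by the membership predicate `Mem`.
Functions are identified when they agree on the ball. -/
structure Character (Mem : (X → ℂ) → Prop) : Type _ where
  toFun : (X → ℂ) → ℂ
  congr' : ∀ f g, Mem f → Mem g → (∀ x ∈ ball (0 : X) 1, f x = g x) → toFun f = toFun g
  map_add' : ∀ f g, Mem f → Mem g → toFun (f + g) = toFun f + toFun g
  map_mul' : ∀ f g, Mem f → Mem g → toFun (f * g) = toFun f * toFun g
  map_smul' : ∀ (c : ℂ) (f), Mem f → toFun (c • f) = c * toFun f
  map_one' : toFun 1 = 1
  continuous' : ∃ C : ℝ, ∀ (f : X → ℂ) (M : ℝ), Mem f →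
    (∀ x ∈ ball (0 : X) 1, ‖f x‖ ≤ M) → ‖toFun f‖ ≤ C * M

variable {X}

/-- The fiber over `0`: characters annihilating all continuous linear functionals. -/
def Character.inFiberZero {Mem : (X → ℂ) → Prop} (τ : Character X Mem) : Prop :=
  ∀ φ : X →L[ℂ] ℂ, τ.toFun ⇑φ = 0

/-- The fiber over `x'' ∈ X**`. -/
def Character.inFiber {Mem : (X → ℂ) → Prop} (τ : Character X Mem)
    (x'' : (X →L[ℂ] ℂ) →L[ℂ] ℂ) : Prop :=
  ∀ φ : X →L[ℂ] ℂ, τ.toFun ⇑φ = x'' φ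

variable (X)

/-- The cluster set of `f` at `0`: limits of `f` along weakly null nets (filters) in the ball. -/
def clusterSetZero (f : X → ℂ) : Set ℂ :=
  {z | ∃ l : Filter X, l.NeBot ∧ l ≤ 𝓟 (ball (0 : X) 1) ∧
    (∀ φ : X →L[ℂ] ℂ, Tendsto (fun x => φ x) l (𝓝 0)) ∧ Tendsto f l (𝓝 z)}

/-- The cluster set of `f` at `x'' ∈ X**`: limits of `f` along nets in the ball converging
weak-star to `x''`. -/
def clusterSet (f : X → ℂ) (x'' : (X →L[ℂ] ℂ) →L[ℂ] ℂ) : Set ℂ :=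
  {z | ∃ l : Filter X, l.NeBot ∧ l ≤ 𝓟 (ball (0 : X) 1) ∧
    (∀ φ : X →L[ℂ] ℂ, Tendsto (fun x => φ x) l (𝓝 (x'' φ))) ∧ Tendsto f l (𝓝 z)}

/-- A finite rank (bounded linear) operator. -/
def FiniteRank (S : X →L[ℂ] X) : Prop :=
  FiniteDimensional ℂ ↥(LinearMap.range (S : X →ₗ[ℂ] X))

/-- Finite type polynomials: the subalgebra of functions generated by the
continuous linear functionals (and constants). -/
def IsFiniteTypePoly (p : X → ℂ) : Prop :=
  p ∈ Algebra.adjoin ℂ (Set.range fun φ : X →L[ℂ] ℂ => (⇑φ : X → ℂ))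

/-- Membership in `A(B)`: uniform limits on the ball of finite type polynomials. -/
def MemA (f : X → ℂ) : Prop :=
  ∀ ε > (0 : ℝ), ∃ p : X → ℂ, IsFiniteTypePoly X p ∧ ∀ x ∈ ball (0 : X) 1, ‖f x - p x‖ ≤ ε

/-- A continuous polynomial: a finite sum of (diagonals of) continuous multilinear maps. -/
def IsContPoly (p : X → ℂ) : Prop :=
  ∃ (N : ℕ) (M : ∀ k : ℕ, ContinuousMultilinearMap ℂ (fun _ : Fin k => X) ℂ),
    ∀ x, p x = ∑ k ∈ Finset.range N, M k (fun _ => x)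

end ClusterValue


set_option linter.unusedSectionVars false
set_option maxHeartbeats 1000000

namespace CVAux
open ClusterValue
variable {X : Type*} [NormedAddCommGroup X] [NormedSpace ℂ X]



lemma scalar_coeff_bound {h : ℂ → ℂ} {ρ M : ℝ} (hρ : 0 < ρ)
    (hd : DifferentiableOn ℂ h (ball 0 ρ))
    (hM : ∀ z ∈ ball (0 : ℂ) ρ, ‖h z‖ ≤ M) (n : ℕ) :
    ‖cauchyPowerSeries h 0 (ρ/2) n‖ ≤ M * ((ρ/2)⁻¹) ^ n := by
  have h2 : (0:ℝ) < ρ/2 := by linarith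
  have hsub : sphere (0:ℂ) (ρ/2) ⊆ ball (0:ℂ) ρ := by
    intro z hz
    simp only [mem_sphere_iff_norm, sub_zero] at hz
    simp only [mem_ball_zero_iff, hz]; linarith
  have hint : ∀ θ : ℝ, ‖h (circleMap 0 (ρ/2) θ)‖ ≤ M := fun θ =>
    hM _ (hsub (circleMap_mem_sphere _ h2.le θ))
  have hcont : Continuous fun θ : ℝ => ‖h (circleMap 0 (ρ/2) θ)‖ :=
    ((hd.continuousOn.mono hsub).comp_continuous (continuous_circleMap 0 (ρ/2))
      (fun θ => circleMap_mem_sphere _ h2.le θ)).norm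
  have key := norm_cauchyPowerSeries_le h 0 (ρ/2) n
  have hIle : (∫ θ : ℝ in (0)..(2*Real.pi), ‖h (circleMap 0 (ρ/2) θ)‖)
      ≤ (2*Real.pi) * M := by
    have := intervalIntegral.integral_mono_on (by positivity : (0:ℝ) ≤ 2*Real.pi)
      (hcont.intervalIntegrable (μ := MeasureTheory.volume) _ _) intervalIntegrable_const (fun θ _ => hint θ)
    simpa using this
  refine key.trans ?_
  have habs : |ρ/2| = ρ/2 := abs_of_pos h2
  rw [habs]
  have h1 : (2*Real.pi)⁻¹ * ∫ θ : ℝ in (0)..(2*Real.pi), ‖h (circleMap 0 (ρ/2) θ)‖ ≤ M := by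
    have hpi : (0:ℝ) < 2*Real.pi := by positivity
    rw [inv_mul_le_iff₀ hpi]
    linarith [hIle]
  have hpow : (0:ℝ) ≤ ((ρ/2)⁻¹) ^ n := by positivity
  exact mul_le_mul_of_nonneg_right h1 hpow

lemma scalar_taylor {h : ℂ → ℂ} {ρ M : ℝ} (hρ : 0 < ρ)
    (hd : DifferentiableOn ℂ h (ball 0 ρ))
    (hM : ∀ z ∈ ball (0 : ℂ) ρ, ‖h z‖ ≤ M) {μ : ℂ} (hμ : ‖μ‖ ≤ ρ/4) :
    ‖h μ - h 0 - μ * deriv h 0‖ ≤ 8 * M * ‖μ‖^2 / ρ^2 := by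
  have hM0 : 0 ≤ M := (norm_nonneg _).trans (hM 0 (mem_ball_self hρ))
  have h2 : (0:ℝ) < ρ/2 := by linarith
  set R : NNReal := ⟨ρ/2, h2.le⟩ with hR
  have hRc : (R : ℝ) = ρ/2 := rfl
  have hcb : closedBall (0:ℂ) (R:ℝ) ⊆ ball (0:ℂ) ρ := by
    intro z hz
    simp only [mem_closedBall_zero_iff] at hz
    simp only [mem_ball_zero_iff]
    rw [hRc] at hz; linarith
  have hp : HasFPowerSeriesOnBall h (cauchyPowerSeries h 0 (R:ℝ)) 0 R :=
    DifferentiableOn.hasFPowerSeriesOnBall (hd.mono hcb) (by exact_mod_cast h2)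
  set p := cauchyPowerSeries h 0 (R:ℝ) with hpdef
  have hcoeff : ∀ n, ‖p n‖ ≤ M * ((ρ/2)⁻¹) ^ n := by
    intro n; rw [hpdef, hRc]; exact scalar_coeff_bound hρ hd hM n
  have happ : ∀ n (w : ℂ), ‖p n fun _ => w‖ ≤ M * ((ρ/2)⁻¹) ^ n * ‖w‖ ^ n := by
    intro n w
    refine (ContinuousMultilinearMap.le_opNorm _ _).trans ?_
    have : (∏ _i : Fin n, ‖w‖) = ‖w‖ ^ n := by simp
    rw [this]
    exact mul_le_mul_of_nonneg_right (hcoeff n) (by positivity)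
  have hmem : μ ∈ Metric.eball (0:ℂ) (R:ENNReal) := by
    rw [Metric.emetric_ball_nnreal]
    simp only [mem_ball_zero_iff, hRc]
    linarith
  have hsum := hp.hasSum hmem
  rw [zero_add] at hsum
  have htail := (hasSum_nat_add_iff' 2).2 hsum
  have hfst : (∑ i ∈ Finset.range 2, (p i fun _ => μ)) = h 0 + μ * deriv h 0 := by
    rw [Finset.sum_range_succ, Finset.sum_range_one]
    have h0 : (p 0 fun _ => μ) = h 0 := hp.coeff_zero _
    have h1 : (p 1 fun _ => μ) = μ * deriv h 0 := by
      rw [p.apply_eq_pow_smul_coeff, hp.hasFPowerSeriesAt.deriv]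
      simp [smul_eq_mul]
    rw [h0, h1]
  rw [hfst] at htail
  have heq : h μ - h 0 - μ * deriv h 0 = ∑' n, (p (n+2) fun _ => μ) := by
    rw [htail.tsum_eq]; ring
  rw [heq]
  have hq : ‖μ‖ * (ρ/2)⁻¹ ≤ 1/2 := by
    rw [mul_inv_le_iff₀ h2]
    linarith
  have hbound : ∀ n : ℕ, ‖p (n+2) fun _ => μ‖ ≤ (4 * M * ‖μ‖^2 / ρ^2) * (1/2)^n := by
    intro n
    refine (happ (n+2) μ).trans ?_
    have : M * (ρ/2)⁻¹ ^ (n+2) * ‖μ‖ ^ (n+2) = M * (‖μ‖ * (ρ/2)⁻¹)^2 * (‖μ‖ * (ρ/2)⁻¹)^n := by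
      ring
    rw [this]
    have e1 : (‖μ‖ * (ρ/2)⁻¹)^2 ≤ ‖μ‖^2 * (ρ/2)⁻¹^2 := le_of_eq (by ring)
    have hnn : 0 ≤ ‖μ‖ * (ρ/2)⁻¹ := by positivity
    have e2 : (‖μ‖ * (ρ/2)⁻¹)^n ≤ (1/2)^n := pow_le_pow_left₀ hnn hq n
    have e3 : M * (‖μ‖ * (ρ/2)⁻¹)^2 ≤ 4 * M * ‖μ‖^2 / ρ^2 := by
      have : (‖μ‖ * (ρ/2)⁻¹)^2 = 4 * ‖μ‖^2/ρ^2 := by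
        field_simp; ring
      rw [this]; apply le_of_eq; ring
    calc M * (‖μ‖ * (ρ/2)⁻¹)^2 * (‖μ‖ * (ρ/2)⁻¹)^n
        ≤ M * (‖μ‖ * (ρ/2)⁻¹)^2 * (1/2)^n := by
          apply mul_le_mul_of_nonneg_left e2 (by positivity)
      _ ≤ (4 * M * ‖μ‖^2 / ρ^2) * (1/2)^n := by
          apply mul_le_mul_of_nonneg_right e3 (by positivity)
  have hgeo : HasSum (fun n : ℕ => (4 * M * ‖μ‖^2 / ρ^2) * (1/2)^n)
      ((4 * M * ‖μ‖^2 / ρ^2) * 2) := hasSum_geometric_two.mul_left _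
  have := tsum_of_norm_bounded hgeo hbound
  refine this.trans (le_of_eq ?_)
  ring


lemma scalar_deriv_bound' {h : ℂ → ℂ} {ρ M : ℝ} (hρ : 0 < ρ)
    (hd : DifferentiableOn ℂ h (ball 0 ρ))
    (hM : ∀ z ∈ ball (0 : ℂ) ρ, ‖h z‖ ≤ M) :
    ‖deriv h 0‖ ≤ 2 * M / ρ := by
  have h2 : (0:ℝ) < ρ/2 := by linarith
  set R : NNReal := ⟨ρ/2, h2.le⟩ with hR
  have hRc : (R : ℝ) = ρ/2 := rfl
  have hcb : closedBall (0:ℂ) (R:ℝ) ⊆ ball (0:ℂ) ρ := by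
    intro z hz
    simp only [mem_closedBall_zero_iff] at hz
    simp only [mem_ball_zero_iff]
    rw [hRc] at hz; linarith
  have hp : HasFPowerSeriesOnBall h (cauchyPowerSeries h 0 (R:ℝ)) 0 R :=
    DifferentiableOn.hasFPowerSeriesOnBall (hd.mono hcb) (by exact_mod_cast h2)
  set p := cauchyPowerSeries h 0 (R:ℝ) with hpdef
  have hd1 : deriv h 0 = p.coeff 1 := hp.hasFPowerSeriesAt.deriv
  have hc1 : ‖p.coeff 1‖ ≤ M * ((ρ/2)⁻¹) ^ 1 := by
    have h1 : (p 1 fun _ => (1:ℂ)) = p.coeff 1 := by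
      rw [p.apply_eq_pow_smul_coeff]; simp
    rw [← h1]
    refine (ContinuousMultilinearMap.le_opNorm _ _).trans ?_
    have : (∏ _i : Fin 1, ‖(1:ℂ)‖) = 1 := by simp
    rw [this, mul_one, hpdef, hRc]
    exact scalar_coeff_bound hρ hd hM 1
  rw [hd1]
  refine hc1.trans (le_of_eq ?_)
  rw [pow_one]
  field_simp





lemma slice_hasDerivAt {f : X → ℂ} {c v : X} {ρ : ℝ}
    (hd : ∀ y ∈ ball c ρ, DifferentiableAt ℂ f y) {μ : ℂ}
    (hμ : c + μ • v ∈ ball c ρ) :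
    HasDerivAt (fun μ : ℂ => f (c + μ • v)) (fderiv ℂ f (c + μ • v) v) μ := by
  have h1 : HasFDerivAt f (fderiv ℂ f (c + μ • v)) (c + μ • v) :=
    (hd _ hμ).hasFDerivAt
  have h2 : HasDerivAt (fun μ : ℂ => c + μ • v) v μ := by
    simpa using ((hasDerivAt_id μ).smul_const v).const_add c
  exact h1.comp_hasDerivAt μ h2

lemma banach_deriv_bound {f : X → ℂ} {c : X} {ρ M : ℝ} (hρ : 0 < ρ)
    (hd : ∀ y ∈ ball c ρ, DifferentiableAt ℂ f y)
    (hM : ∀ y ∈ ball c ρ, ‖f y‖ ≤ M) (v : X) :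
    ‖fderiv ℂ f c v‖ ≤ 2 * M * ‖v‖ / ρ := by
  have hM0 : 0 ≤ M := (norm_nonneg _).trans (hM c (mem_ball_self hρ))
  rcases eq_or_ne v 0 with rfl | hv
  · simp only [map_zero, norm_zero]; positivity
  have hvn : 0 < ‖v‖ := norm_pos_iff.2 hv
  set ρ' := ρ / ‖v‖ with hρ'
  have hρ'0 : 0 < ρ' := by positivity
  set h : ℂ → ℂ := fun μ => f (c + μ • v) with hh
  have hmem : ∀ μ : ℂ, μ ∈ ball (0:ℂ) ρ' → c + μ • v ∈ ball c ρ := by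
    intro μ hmu
    simp only [mem_ball_zero_iff] at hmu
    simp only [mem_ball, dist_eq_norm]
    have : ‖c + μ • v - c‖ = ‖μ‖ * ‖v‖ := by simp [norm_smul]
    rw [this]
    calc ‖μ‖ * ‖v‖ < ρ' * ‖v‖ := mul_lt_mul_of_pos_right hmu hvn
      _ = ρ := by rw [hρ']; field_simp [hvn.ne']
  have hd' : DifferentiableOn ℂ h (ball 0 ρ') := by
    intro μ hmu
    exact ((slice_hasDerivAt hd (hmem μ hmu)).differentiableAt).differentiableWithinAt
  have hM' : ∀ z ∈ ball (0:ℂ) ρ', ‖h z‖ ≤ M := fun z hz => hM _ (hmem z hz)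
  have hder : deriv h 0 = fderiv ℂ f c v := by
    have := slice_hasDerivAt (v := v) hd (μ := 0) (by simp only [zero_smul, add_zero]; exact mem_ball_self hρ)
    simp only [zero_smul, add_zero] at this
    exact this.deriv
  have := scalar_deriv_bound' hρ'0 hd' hM'
  rw [hder] at this
  refine this.trans (le_of_eq ?_)
  rw [hρ']
  field_simp

lemma banach_taylor_bound {f : X → ℂ} {c : X} {ρ M : ℝ} (hρ : 0 < ρ)
    (hd : ∀ y ∈ ball c ρ, DifferentiableAt ℂ f y)
    (hM : ∀ y ∈ ball c ρ, ‖f y‖ ≤ M) {v : X} {μ : ℂ}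
    (hμv : ‖μ‖ * ‖v‖ ≤ ρ / 4) :
    ‖f (c + μ • v) - f c - μ * fderiv ℂ f c v‖ ≤ (8 * M / ρ^2) * (‖μ‖ * ‖v‖)^2 := by
  have hM0 : 0 ≤ M := (norm_nonneg _).trans (hM c (mem_ball_self hρ))
  rcases eq_or_ne v 0 with rfl | hv
  · simp only [smul_zero, add_zero, map_zero, mul_zero, sub_zero, sub_self, norm_zero]
    positivity
  have hvn : 0 < ‖v‖ := norm_pos_iff.2 hv
  set ρ' := ρ / ‖v‖ with hρ'
  have hρ'0 : 0 < ρ' := by positivity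
  set h : ℂ → ℂ := fun μ => f (c + μ • v) with hh
  have hmem : ∀ μ : ℂ, μ ∈ ball (0:ℂ) ρ' → c + μ • v ∈ ball c ρ := by
    intro μ hmu
    simp only [mem_ball_zero_iff] at hmu
    simp only [mem_ball, dist_eq_norm]
    have : ‖c + μ • v - c‖ = ‖μ‖ * ‖v‖ := by simp [norm_smul]
    rw [this]
    calc ‖μ‖ * ‖v‖ < ρ' * ‖v‖ := mul_lt_mul_of_pos_right hmu hvn
      _ = ρ := by rw [hρ']; field_simp [hvn.ne']
  have hd' : DifferentiableOn ℂ h (ball 0 ρ') := by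
    intro μ hmu
    exact ((slice_hasDerivAt hd (hmem μ hmu)).differentiableAt).differentiableWithinAt
  have hM' : ∀ z ∈ ball (0:ℂ) ρ', ‖h z‖ ≤ M := fun z hz => hM _ (hmem z hz)
  have hder : deriv h 0 = fderiv ℂ f c v := by
    have := slice_hasDerivAt (v := v) hd (μ := 0) (by simp only [zero_smul, add_zero]; exact mem_ball_self hρ)
    simp only [zero_smul, add_zero] at this
    exact this.deriv
  have hμ' : ‖μ‖ ≤ ρ' / 4 := by
    rw [hρ']
    rw [div_div]
    rw [le_div_iff₀ (by positivity)]
    linarith [hμv]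
  have key := scalar_taylor hρ'0 hd' hM' hμ'
  have h0 : h 0 = f c := by simp [hh]
  rw [hder, h0] at key
  refine key.trans (le_of_eq ?_)
  rw [hρ']
  field_simp






lemma uc_of_lip {g : X → ℂ} {s : Set X} {L : ℝ}
    (h : ∀ x ∈ s, ∀ y ∈ s, dist (g x) (g y) ≤ L * dist x y) :
    UniformContinuousOn g s := by
  rw [Metric.uniformContinuousOn_iff]
  intro ε hε
  refine ⟨ε / (|L| + 1), by positivity, fun x hx y hy hxy => ?_⟩
  have h1 : dist (g x) (g y) ≤ |L| * dist x y :=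
    (h x hx y hy).trans (mul_le_mul_of_nonneg_right (le_abs_self L) dist_nonneg)
  have h2 : (|L| + 1) * dist x y < (|L| + 1) * (ε / (|L| + 1)) :=
    mul_lt_mul_of_pos_left hxy (by positivity)
  have h3 : (|L| + 1) * (ε / (|L| + 1)) = ε := by field_simp
  nlinarith [dist_nonneg (x := x) (y := y), abs_nonneg L]

lemma memAu_analyticOnNhd {f : X → ℂ} (hf : MemAu X f) :
    AnalyticOnNhd ℂ f (ball (0 : X) 1) :=
  (isOpen_ball.analyticOn_iff_analyticOnNhd).1 hf.1

lemma memAu_zero : MemAu X (0 : X → ℂ) :=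
  ⟨analyticOnNhd_const.analyticOn, ⟨0, by simp⟩, (uniformContinuousOn_iff_restrict).2 uniformContinuous_const⟩

lemma memAu_add {f g : X → ℂ} (hf : MemAu X f) (hg : MemAu X g) :
    MemAu X (fun x => f x + g x) := by
  obtain ⟨Cf, hCf⟩ := hf.2.1
  obtain ⟨Cg, hCg⟩ := hg.2.1
  refine ⟨((memAu_analyticOnNhd hf).add (memAu_analyticOnNhd hg)).analyticOn,
    ⟨Cf + Cg, fun x hx => (norm_add_le _ _).trans (add_le_add (hCf x hx) (hCg x hx))⟩, ?_⟩
  have h1 := (uniformContinuousOn_iff_restrict).1 hf.2.2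
  have h2 := (uniformContinuousOn_iff_restrict).1 hg.2.2
  exact (uniformContinuousOn_iff_restrict).2 (h1.add h2)

lemma memAu_const_mul (c : ℂ) {f : X → ℂ} (hf : MemAu X f) :
    MemAu X (fun x => c * f x) := by
  obtain ⟨Cf, hCf⟩ := hf.2.1
  refine ⟨(analyticOnNhd_const.mul (memAu_analyticOnNhd hf)).analyticOn,
    ⟨‖c‖ * Cf, fun x hx => ?_⟩, ?_⟩
  · rw [norm_mul]
    have h0 : 0 ≤ ‖c‖ := norm_nonneg _
    exact mul_le_mul_of_nonneg_left (hCf x hx) h0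
  · have h1 := (uniformContinuousOn_iff_restrict).1 hf.2.2
    exact (uniformContinuousOn_iff_restrict).2 (by exact h1.const_smul c)

lemma memAu_neg {f : X → ℂ} (hf : MemAu X f) : MemAu X (fun x => -f x) := by
  have := memAu_const_mul (-1 : ℂ) hf
  simpa using this

lemma memAu_sub {f g : X → ℂ} (hf : MemAu X f) (hg : MemAu X g) :
    MemAu X (fun x => f x - g x) := by
  have := memAu_add hf (memAu_neg hg)
  simpa [sub_eq_add_neg] using this

lemma memAu_bound_nonneg {f : X → ℂ} {C : ℝ} (h : ∀ x ∈ ball (0 : X) 1, ‖f x‖ ≤ C) :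
    0 ≤ C :=
  (norm_nonneg _).trans (h 0 (mem_ball_self one_pos))

lemma memAu_mul {f g : X → ℂ} (hf : MemAu X f) (hg : MemAu X g) :
    MemAu X (fun x => f x * g x) := by
  obtain ⟨Cf, hCf⟩ := hf.2.1
  obtain ⟨Cg, hCg⟩ := hg.2.1
  have hCf0 : 0 ≤ Cf := memAu_bound_nonneg hCf
  have hCg0 : 0 ≤ Cg := memAu_bound_nonneg hCg
  refine ⟨((memAu_analyticOnNhd hf).mul (memAu_analyticOnNhd hg)).analyticOn,
    ⟨Cf * Cg, fun x hx => by
      rw [norm_mul]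
      exact mul_le_mul (hCf x hx) (hCg x hx) (norm_nonneg _) hCf0⟩, ?_⟩
  rw [Metric.uniformContinuousOn_iff_le]
  intro ε hε
  set Cm := max Cf Cg + 1 with hCm
  have hCm0 : 0 < Cm := by positivity
  set ε' := ε / (2 * Cm) with hε'
  have hε'0 : 0 < ε' := by positivity
  obtain ⟨δ₁, hδ₁, h₁⟩ := (Metric.uniformContinuousOn_iff_le).1 hf.2.2 ε' hε'0
  obtain ⟨δ₂, hδ₂, h₂⟩ := (Metric.uniformContinuousOn_iff_le).1 hg.2.2 ε' hε'0
  refine ⟨min δ₁ δ₂, lt_min hδ₁ hδ₂, fun x hx y hy hxy => ?_⟩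
  have d1 := h₁ x hx y hy (hxy.trans (min_le_left _ _))
  have d2 := h₂ x hx y hy (hxy.trans (min_le_right _ _))
  have key : f x * g x - f y * g y = f x * (g x - g y) + (f x - f y) * g y := by ring
  rw [dist_eq_norm] at d1 d2 ⊢
  rw [key]
  have hb := norm_add_le (f x * (g x - g y)) ((f x - f y) * g y)
  rw [norm_mul, norm_mul] at hb
  have e1 : ‖f x‖ * ‖g x - g y‖ ≤ Cf * ε' :=
    mul_le_mul (hCf x hx) d2 (norm_nonneg _) hCf0
  have e2 : ‖f x - f y‖ * ‖g y‖ ≤ ε' * Cg :=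
    mul_le_mul d1 (hCg y hy) (norm_nonneg _) hε'0.le
  have e3 : Cf * ε' + ε' * Cg ≤ 2 * Cm * ε' := by
    have : Cf ≤ Cm := by rw [hCm]; have := le_max_left Cf Cg; linarith
    have : Cg ≤ Cm := by rw [hCm]; have := le_max_right Cf Cg; linarith
    nlinarith [hε'0.le]
  have e4 : 2 * Cm * ε' = ε := by
    rw [hε']; field_simp
  linarith

lemma memAu_sum {ι : Type*} (s : Finset ι) (g : ι → X → ℂ)
    (h : ∀ j ∈ s, MemAu X (g j)) : MemAu X (fun x => ∑ j ∈ s, g j x) := by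
  classical
  induction s using Finset.induction_on with
  | empty => exact memAu_zero
  | @insert a t hni ih =>
    have h1 : MemAu X (g a) := h a (Finset.mem_insert_self a t)
    have h2 : MemAu X (fun x => ∑ j ∈ t, g j x) :=
      ih (fun j hj => h j (Finset.mem_insert_of_mem hj))
    have := memAu_add h1 h2
    have he : (fun x => ∑ j ∈ insert a t, g j x)
        = fun x => g a x + ∑ j ∈ t, g j x := by
      funext x
      exact Finset.sum_insert hni
    rw [he]
    exact this

lemma memAu_clm (ψ : X →L[ℂ] ℂ) : MemAu X (⇑ψ) := by
  refine ⟨AnalyticOnNhd.analyticOn (fun x _ => ψ.analyticAt x), ⟨‖ψ‖, fun x hx => ?_⟩, ?_⟩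
  · refine (ψ.le_opNorm x).trans ?_
    have : ‖x‖ ≤ 1 := (mem_ball_zero_iff.1 hx).le
    nlinarith [norm_nonneg ψ]
  · apply uc_of_lip (L := ‖ψ‖)
    intro x _ y _
    rw [dist_eq_norm, dist_eq_norm, ← map_sub]
    exact ψ.le_opNorm _

lemma memAu_comp_clm {f : X → ℂ} (hf : MemAu X f) (T : X →L[ℂ] X)
    (hT : ∀ x, ‖T x‖ ≤ ‖x‖) : MemAu X (fun x => f (T x)) := by
  obtain ⟨Cf, hCf⟩ := hf.2.1
  have hmaps : Set.MapsTo (⇑T) (ball (0:X) 1) (ball (0:X) 1) := by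
    intro x hx
    rw [mem_ball_zero_iff] at hx ⊢
    exact (hT x).trans_lt hx
  refine ⟨((memAu_analyticOnNhd hf).comp (fun x _ => T.analyticAt x) hmaps).analyticOn,
    ⟨Cf, fun x hx => hCf _ (hmaps hx)⟩, ?_⟩
  rw [Metric.uniformContinuousOn_iff_le]
  intro ε hε
  obtain ⟨δ, hδ, h⟩ := (Metric.uniformContinuousOn_iff_le).1 hf.2.2 ε hε
  refine ⟨δ, hδ, fun x hx y hy hxy => ?_⟩
  refine h _ (hmaps hx) _ (hmaps hy) ?_
  rw [dist_eq_norm] at hxy ⊢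
  rw [← map_sub]
  exact (hT _).trans hxy

lemma char_bound (φ : Character X (MemAu X)) :
    ∃ C : ℝ, 0 < C ∧ ∀ (f : X → ℂ) (M : ℝ), MemAu X f →
      (∀ x ∈ ball (0 : X) 1, ‖f x‖ ≤ M) → ‖φ.toFun f‖ ≤ C * M := by
  obtain ⟨C, hC⟩ := φ.continuous'
  refine ⟨max C 1, lt_of_lt_of_le one_pos (le_max_right _ _), fun f M hf hM => ?_⟩
  refine (hC f M hf hM).trans ?_
  exact mul_le_mul_of_nonneg_right (le_max_left _ _) (memAu_bound_nonneg hM)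

lemma char_zero (φ : Character X (MemAu X)) : φ.toFun 0 = 0 := by
  have h := φ.map_smul' 0 0 memAu_zero
  rw [zero_smul] at h
  simpa using h

lemma char_add' (φ : Character X (MemAu X)) {f g : X → ℂ} (hf : MemAu X f)
    (hg : MemAu X g) : φ.toFun (fun x => f x + g x) = φ.toFun f + φ.toFun g :=
  φ.map_add' f g hf hg

lemma char_smul' (φ : Character X (MemAu X)) (c : ℂ) {f : X → ℂ} (hf : MemAu X f) :
    φ.toFun (fun x => c * f x) = c * φ.toFun f :=
  φ.map_smul' c f hf

lemma char_sub' (φ : Character X (MemAu X)) {f g : X → ℂ} (hf : MemAu X f)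
    (hg : MemAu X g) : φ.toFun (fun x => f x - g x) = φ.toFun f - φ.toFun g := by
  have h1 : (fun x => f x - g x) = fun x => f x + (-1 : ℂ) * g x := by
    funext x; ring
  rw [h1, char_add' φ hf (memAu_const_mul (-1) hg), char_smul' φ (-1) hg]
  ring

lemma char_sum' (φ : Character X (MemAu X)) {ι : Type*} (s : Finset ι) (g : ι → X → ℂ)
    (h : ∀ j ∈ s, MemAu X (g j)) :
    φ.toFun (fun x => ∑ j ∈ s, g j x) = ∑ j ∈ s, φ.toFun (g j) := by
  classical
  induction s using Finset.induction_on with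
  | empty =>
    have : (fun x : X => ∑ j ∈ (∅ : Finset ι), g j x) = 0 := by funext x; simp
    rw [this, char_zero]
    simp
  | @insert a t hni ih =>
    have h1 : MemAu X (g a) := h a (Finset.mem_insert_self a t)
    have h2 : MemAu X (fun x => ∑ j ∈ t, g j x) :=
      memAu_sum t g (fun j hj => h j (Finset.mem_insert_of_mem hj))
    have he : (fun x => ∑ j ∈ insert a t, g j x)
        = fun x => g a x + ∑ j ∈ t, g j x := by
      funext x; exact Finset.sum_insert hni
    rw [he, char_add' φ h1 h2, ih (fun j hj => h j (Finset.mem_insert_of_mem hj)),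
      Finset.sum_insert hni]

lemma memAu_fderiv_comp {f : X → ℂ} {r M : ℝ} (hr0 : 0 < r) (hr1 : r < 1)
    (hfa : AnalyticOnNhd ℂ f (ball (0 : X) 1))
    (hM : ∀ x ∈ ball (0 : X) 1, ‖f x‖ ≤ M)
    (T : X →L[ℂ] X) (hT : ∀ x, ‖T x‖ ≤ r * ‖x‖) (vec : X) :
    MemAu X (fun x => fderiv ℂ f (T x) vec) := by
  have hM0 : 0 ≤ M := (norm_nonneg _).trans (hM 0 (mem_ball_self one_pos))
  set g : X → ℂ := fun y => fderiv ℂ f y vec with hg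
  have hg_an : AnalyticOnNhd ℂ g (ball (0 : X) 1) := by
    intro y hy
    exact ((ContinuousLinearMap.apply ℂ ℂ vec).analyticAt (fderiv ℂ f y)).comp
      (hfa.fderiv y hy)
  have hsub : ∀ (c : X) (ρ : ℝ), ‖c‖ + ρ ≤ 1 → ball c ρ ⊆ ball (0:X) 1 := by
    intro c ρ hcρ z hz
    rw [mem_ball, dist_eq_norm] at hz
    rw [mem_ball_zero_iff]
    calc ‖z‖ = ‖c + (z - c)‖ := by rw [add_sub_cancel]
      _ ≤ ‖c‖ + ‖z - c‖ := norm_add_le _ _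
      _ < ‖c‖ + ρ := by linarith
      _ ≤ 1 := hcρ
  have hTmem : ∀ x ∈ ball (0:X) 1, T x ∈ ball (0:X) r := by
    intro x hx
    rw [mem_ball_zero_iff] at hx ⊢
    calc ‖T x‖ ≤ r * ‖x‖ := hT x
      _ < r * 1 := by exact mul_lt_mul_of_pos_left hx hr0
      _ = r := mul_one r
  have hTle : ∀ x, ‖T x‖ ≤ ‖x‖ := by
    intro x
    refine (hT x).trans ?_
    nlinarith [norm_nonneg x]
  have hbd : ∀ c ∈ ball (0:X) r, ‖g c‖ ≤ 2 * M * ‖vec‖ / (1 - r) := by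
    intro c hc
    rw [mem_ball_zero_iff] at hc
    have hss : ball c (1 - r) ⊆ ball (0:X) 1 := hsub c (1-r) (by linarith)
    exact banach_deriv_bound (by linarith)
      (fun y hy => (hfa y (hss hy)).differentiableAt)
      (fun y hy => hM y (hss hy)) vec
  refine ⟨AnalyticOnNhd.analyticOn ?_, ⟨2 * M * ‖vec‖ / (1 - r), fun x hx => ?_⟩, ?_⟩
  · exact hg_an.comp (fun x _ => T.analyticAt x)
      (fun x hx => ball_subset_ball hr1.le (hTmem x hx))
  · exact hbd _ (hTmem x hx)
  · -- uniform continuity via Lipschitz bound on g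
    set r1 := (1 + r) / 2 with hr1def
    have hrr1 : r < r1 := by rw [hr1def]; linarith
    have hr11 : r1 < 1 := by rw [hr1def]; linarith
    set Mg := 2 * M * ‖vec‖ / (1 - r1) with hMg
    have hMg0 : 0 ≤ Mg := by
      rw [hMg]
      have : (0:ℝ) < 1 - r1 := by linarith
      positivity
    have hgb : ∀ y ∈ ball (0:X) r1, ‖g y‖ ≤ Mg := by
      intro y hy
      rw [mem_ball_zero_iff] at hy
      have hss : ball y (1 - r1) ⊆ ball (0:X) 1 := hsub y (1-r1) (by linarith)
      exact banach_deriv_bound (by linarith)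
        (fun z hz => (hfa z (hss hz)).differentiableAt)
        (fun z hz => hM z (hss hz)) vec
    set L := 2 * Mg / (r1 - r) with hL
    have hDg : ∀ y ∈ ball (0:X) r, ‖fderiv ℂ g y‖ ≤ L := by
      intro y hy
      rw [mem_ball_zero_iff] at hy
      have hr1r : (0:ℝ) < r1 - r := by linarith
      refine ContinuousLinearMap.opNorm_le_bound _ (by rw [hL]; positivity) fun u => ?_
      have hss : ball y (r1 - r) ⊆ ball (0:X) r1 := by
        intro z hz
        rw [mem_ball, dist_eq_norm] at hz
        rw [mem_ball_zero_iff]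
        calc ‖z‖ = ‖y + (z - y)‖ := by rw [add_sub_cancel]
          _ ≤ ‖y‖ + ‖z - y‖ := norm_add_le _ _
          _ < r + (r1 - r) := by exact add_lt_add hy hz
          _ = r1 := by ring
      have := banach_deriv_bound (f := g) (c := y) (M := Mg) (by linarith)
        (fun z hz => ((hg_an z (ball_subset_ball hr11.le (hss hz))).differentiableAt))
        (fun z hz => hgb z (hss hz)) u
      refine this.trans (le_of_eq ?_)
      rw [hL]; ring
    have hlip : ∀ y ∈ ball (0:X) r, ∀ z ∈ ball (0:X) r, ‖g z - g y‖ ≤ L * ‖z - y‖ := by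
      intro y hy z hz
      exact (convex_ball (0:X) r).norm_image_sub_le_of_norm_fderiv_le
        (fun w hw => (hg_an w (ball_subset_ball hr11.le
          (ball_subset_ball hrr1.le hw))).differentiableAt)
        hDg hy hz
    apply uc_of_lip (L := L * ‖T‖)
    intro x hx y hy
    rw [dist_eq_norm, dist_eq_norm]
    calc ‖g (T x) - g (T y)‖ ≤ L * ‖T x - T y‖ :=
        hlip (T y) (hTmem y hy) (T x) (hTmem x hx)
      _ ≤ L * (‖T‖ * ‖x - y‖) := by
          have hL0 : 0 ≤ L := by
            rw [hL]
            have : (0:ℝ) < r1 - r := by linarith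
            positivity
          refine mul_le_mul_of_nonneg_left ?_ hL0
          rw [← map_sub]
          exact T.le_opNorm _
      _ = L * ‖T‖ * ‖x - y‖ := by ring

lemma quadratic_const {G : ℝ → ℂ} {K δ : ℝ} (hδ : 0 < δ)
    (h : ∀ t ∈ Set.Icc (0:ℝ) 1, ∀ s ∈ Set.Icc (0:ℝ) 1, |s - t| ≤ δ →
      ‖G s - G t‖ ≤ K * (s - t)^2) : G 1 = G 0 := by
  set K' := max K 0 with hK'
  have hK'0 : 0 ≤ K' := le_max_right _ _
  have h' : ∀ t ∈ Set.Icc (0:ℝ) 1, ∀ s ∈ Set.Icc (0:ℝ) 1, |s - t| ≤ δ →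
      ‖G s - G t‖ ≤ K' * (s - t)^2 := by
    intro t ht s hs hst
    refine (h t ht s hs hst).trans ?_
    exact mul_le_mul_of_nonneg_right (le_max_left _ _) (sq_nonneg _)
  have key : ∀ ε > (0:ℝ), ‖G 1 - G 0‖ ≤ ε := by
    intro ε hε
    obtain ⟨n, hn⟩ := exists_nat_gt (max (1/δ) (K'/ε))
    have hn1 : (1:ℝ)/δ < n := lt_of_le_of_lt (le_max_left _ _) hn
    have hn2 : K'/ε < n := lt_of_le_of_lt (le_max_right _ _) hn
    have hnpos : (0:ℝ) < n := lt_trans (by positivity) hn1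
    have hn0 : (n:ℝ) ≠ 0 := ne_of_gt hnpos
    have htel : G 1 - G 0 = ∑ i ∈ Finset.range n, (G ((i+1)/n) - G (i/n)) := by
      have h0 := Finset.sum_range_sub (fun i => G (i/n)) n
      simp only [Nat.cast_add, Nat.cast_one] at h0
      rw [h0, div_self hn0]
      norm_num
    have hstep : ∀ i ∈ Finset.range n, ‖G ((i+1)/n) - G (i/n)‖ ≤ K' / n^2 := by
      intro i hi
      rw [Finset.mem_range] at hi
      have hi1 : ((i:ℝ)+1) ≤ n := by exact_mod_cast Nat.succ_le_of_lt hi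
      have hmem1 : (i:ℝ)/n ∈ Set.Icc (0:ℝ) 1 := by
        constructor
        · positivity
        · rw [div_le_one hnpos]; linarith
      have hmem2 : ((i:ℝ)+1)/n ∈ Set.Icc (0:ℝ) 1 := by
        constructor
        · positivity
        · rw [div_le_one hnpos]; linarith
      have hdiff : ((i:ℝ)+1)/n - (i:ℝ)/n = 1/n := by
        field_simp; ring
      have habs : |((i:ℝ)+1)/n - (i:ℝ)/n| ≤ δ := by
        rw [hdiff, abs_of_pos (by positivity)]
        rw [div_le_iff₀ hnpos]
        rw [div_lt_iff₀ hδ] at hn1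
        linarith
      have := h' ((i:ℝ)/n) hmem1 (((i:ℝ)+1)/n) hmem2 habs
      refine this.trans (le_of_eq ?_)
      rw [hdiff]
      field_simp
    calc ‖G 1 - G 0‖ ≤ ∑ i ∈ Finset.range n, ‖G ((i+1)/n) - G (i/n)‖ := by
          rw [htel]; exact norm_sum_le _ _
      _ ≤ ∑ _i ∈ Finset.range n, K' / n^2 := Finset.sum_le_sum hstep
      _ = n * (K' / n^2) := by rw [Finset.sum_const, Finset.card_range]; simp [nsmul_eq_mul]
      _ = K' / n := by field_simp
      _ ≤ ε := by
        rw [div_le_iff₀ hnpos]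
        rw [div_lt_iff₀ hε] at hn2
        linarith
  by_contra hne
  have hpos : 0 < ‖G 1 - G 0‖ := by
    rw [norm_pos_iff, sub_ne_zero]
    exact hne
  have := key (‖G 1 - G 0‖/2) (by positivity)
  linarith

lemma fixed_r_step (S : X →L[ℂ] X)
    (hS : FiniteDimensional ℂ ↥(LinearMap.range (S : X →ₗ[ℂ] X)))
    (hPn : ∀ x, ‖(ContinuousLinearMap.id ℂ X - S) x‖ ≤ ‖x‖)
    (φ : Character X (MemAu X)) (hφ : φ.inFiberZero)
    {f : X → ℂ} (hf : MemAu X f) {r : ℝ} (hr0 : 0 < r) (hr1 : r < 1) :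
    φ.toFun (fun x => f ((r:ℂ) • x)) =
      φ.toFun (fun x => f ((r:ℂ) • (ContinuousLinearMap.id ℂ X - S) x)) := by
  classical
  set P : X →L[ℂ] X := ContinuousLinearMap.id ℂ X - S with hPdef
  set U : X →L[ℂ] X := (r:ℂ) • P with hUdef
  set Vc : X →L[ℂ] X := (r:ℂ) • S with hVdef
  set W : ℝ → X →L[ℂ] X := fun t => U + (t:ℂ) • Vc with hWdef
  have hWapp : ∀ (t : ℝ) (x : X),
      W t x = (r:ℂ) • P x + (t:ℂ) • ((r:ℂ) • S x) := by
    intro t x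
    simp [hWdef, hUdef, hVdef]
  have hPS : ∀ x : X, P x + S x = x := by
    intro x
    simp [hPdef]
  have hWnorm : ∀ t : ℝ, 0 ≤ t → t ≤ 1 → ∀ x, ‖W t x‖ ≤ r * ‖x‖ := by
    intro t ht0 ht1 x
    have e1 : W t x = (r:ℂ) • (P x + (t:ℂ) • S x) := by
      rw [hWapp]
      rw [smul_add]
      congr 1
      rw [smul_comm]
    have e2 : P x + (t:ℂ) • S x = ((1 - t : ℝ) : ℂ) • P x + ((t:ℝ):ℂ) • (P x + S x) := by
      push_cast
      module
    have e3 : ‖P x + (t:ℂ) • S x‖ ≤ ‖x‖ := by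
      rw [e2, hPS]
      refine (norm_add_le _ _).trans ?_
      rw [norm_smul, norm_smul, Complex.norm_real, Complex.norm_real,
        Real.norm_eq_abs, Real.norm_eq_abs, abs_of_nonneg (by linarith : (0:ℝ) ≤ 1 - t),
        abs_of_nonneg ht0]
      have := hPn x
      nlinarith [norm_nonneg x]
    rw [e1, norm_smul, Complex.norm_real, Real.norm_eq_abs, abs_of_pos hr0]
    exact mul_le_mul_of_nonneg_left e3 hr0.le
  have hWle : ∀ t : ℝ, 0 ≤ t → t ≤ 1 → ∀ x, ‖W t x‖ ≤ ‖x‖ := by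
    intro t ht0 ht1 x
    refine (hWnorm t ht0 ht1 x).trans ?_
    nlinarith [norm_nonneg x]
  set g : ℝ → X → ℂ := fun t => fun x => f (W t x) with hgdef
  have hgMem : ∀ t : ℝ, 0 ≤ t → t ≤ 1 → MemAu X (g t) := fun t h0 h1 =>
    memAu_comp_clm hf (W t) (hWle t h0 h1)
  obtain ⟨M₀, hM₀⟩ := hf.2.1
  set M := max M₀ 0 with hMdef
  have hMf : ∀ x ∈ ball (0:X) 1, ‖f x‖ ≤ M := fun x hx =>
    (hM₀ x hx).trans (le_max_left _ _)
  have hM0 : 0 ≤ M := le_max_right _ _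
  have hfa := memAu_analyticOnNhd hf
  -- finite rank decomposition
  haveI : FiniteDimensional ℂ ↥(LinearMap.range (S : X →ₗ[ℂ] X)) := hS
  set n := Module.finrank ℂ ↥(LinearMap.range (S : X →ₗ[ℂ] X)) with hn
  set bV : Module.Basis (Fin n) ℂ ↥(LinearMap.range (S : X →ₗ[ℂ] X)) :=
    Module.finBasis ℂ _ with hbV
  set e : Fin n → X := fun j => (bV j : X) with he
  have hmemRange : ∀ x : X, S x ∈ LinearMap.range (S : X →ₗ[ℂ] X) := fun x => ⟨x, rfl⟩
  set Scod : X →L[ℂ] ↥(LinearMap.range (S : X →ₗ[ℂ] X)) :=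
    S.codRestrict _ hmemRange with hScod
  set ξ : Fin n → X →L[ℂ] ℂ := fun j =>
    (LinearMap.toContinuousLinearMap (bV.coord j)).comp Scod with hξ
  have hdecomp : ∀ x : X, S x = ∑ j, ξ j x • e j := by
    intro x
    have h1 := bV.sum_repr (Scod x)
    have h2 : ((∑ j, bV.repr (Scod x) j • bV j : _) : X) = ((Scod x : _) : X) :=
      congrArg _ h1
    simp only [AddSubmonoidClass.coe_finset_sum, SetLike.val_smul] at h2
    have h3 : ((Scod x : _) : X) = S x := rfl
    rw [h3] at h2
    rw [← h2]
    refine Finset.sum_congr rfl fun j _ => rfl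
  set bfun : ℝ → Fin n → X → ℂ := fun t j =>
    fun x => fderiv ℂ f (W t x) ((r:ℂ) • e j) with hbfun
  set a : ℝ → X → ℂ := fun t => fun x => fderiv ℂ f (W t x) (Vc x) with hadef
  have haeq : ∀ (t : ℝ) (x : X), a t x = ∑ j, ξ j x * bfun t j x := by
    intro t x
    have h1 : Vc x = ∑ j, ξ j x • ((r:ℂ) • e j) := by
      have : Vc x = (r:ℂ) • S x := by simp [hVdef]
      rw [this, hdecomp x, Finset.smul_sum]
      refine Finset.sum_congr rfl fun j _ => ?_
      rw [smul_comm]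
    simp only [hadef]
    rw [h1, map_sum]
    refine Finset.sum_congr rfl fun j _ => ?_
    rw [map_smul, smul_eq_mul]
  have hbMem : ∀ t : ℝ, 0 ≤ t → t ≤ 1 → ∀ j, MemAu X (bfun t j) := fun t h0 h1 j =>
    memAu_fderiv_comp hr0 hr1 hfa hMf (W t) (hWnorm t h0 h1) _
  have haMem : ∀ t : ℝ, 0 ≤ t → t ≤ 1 → MemAu X (a t) := by
    intro t h0 h1
    have hfe : a t = fun x => ∑ j, ξ j x * bfun t j x := funext (haeq t)
    rw [hfe]
    exact memAu_sum Finset.univ _ fun j _ =>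
      memAu_mul (memAu_clm (ξ j)) (hbMem t h0 h1 j)
  have hφa : ∀ t : ℝ, 0 ≤ t → t ≤ 1 → φ.toFun (a t) = 0 := by
    intro t h0 h1
    have hfe : a t = fun x => ∑ j, ξ j x * bfun t j x := funext (haeq t)
    rw [hfe, char_sum' φ Finset.univ _ (fun j _ =>
      memAu_mul (memAu_clm (ξ j)) (hbMem t h0 h1 j))]
    refine Finset.sum_eq_zero fun j _ => ?_
    have hmul := φ.map_mul' (⇑(ξ j)) (bfun t j) (memAu_clm (ξ j)) (hbMem t h0 h1 j)
    have h2 : (fun x => ξ j x * bfun t j x) = (⇑(ξ j)) * bfun t j := rfl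
    rw [h2, hmul, hφ (ξ j), zero_mul]
  obtain ⟨C, hC0, hC⟩ := char_bound φ
  have h1r : (0:ℝ) < 1 - r := by linarith
  set δ := (1 - r)/(4*(‖S‖+1)) with hδdef
  have hδ0 : 0 < δ := by
    rw [hδdef]
    positivity
  set K := 8*M/(1-r)^2*(‖S‖+1)^2 with hK
  have hTay : ∀ t ∈ Set.Icc (0:ℝ) 1, ∀ s ∈ Set.Icc (0:ℝ) 1, |s - t| ≤ δ →
      ∀ x ∈ ball (0:X) 1,
        ‖g s x - g t x - ((s:ℂ) - (t:ℂ)) * a t x‖ ≤ K * (s-t)^2 := by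
    intro t ht s hs hst x hx
    obtain ⟨ht0, ht1⟩ := ht
    obtain ⟨hs0, hs1⟩ := hs
    have hx1 : ‖x‖ < 1 := mem_ball_zero_iff.1 hx
    have hballW : ball (W t x) (1-r) ⊆ ball (0:X) 1 := by
      intro z hz
      rw [mem_ball, dist_eq_norm] at hz
      rw [mem_ball_zero_iff]
      have h1 : ‖W t x‖ ≤ r * ‖x‖ := hWnorm t ht0 ht1 x
      calc ‖z‖ = ‖W t x + (z - W t x)‖ := by rw [add_sub_cancel]
        _ ≤ ‖W t x‖ + ‖z - W t x‖ := norm_add_le _ _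
        _ < r * ‖x‖ + (1 - r) := by linarith
        _ ≤ 1 := by nlinarith
    have hVx : ‖Vc x‖ ≤ ‖S‖ := by
      have hv : Vc x = (r:ℂ) • S x := by simp [hVdef]
      rw [hv, norm_smul, Complex.norm_real, Real.norm_eq_abs, abs_of_pos hr0]
      nlinarith [norm_nonneg S, S.le_opNorm x, norm_nonneg (S x)]
    have hμ : ‖((s:ℂ) - (t:ℂ))‖ = |s - t| := by
      rw [← Complex.ofReal_sub, Complex.norm_real, Real.norm_eq_abs]
    have hcond : ‖(s:ℂ)-(t:ℂ)‖ * ‖Vc x‖ ≤ (1-r)/4 := by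
      rw [hμ]
      calc |s-t| * ‖Vc x‖ ≤ δ * ‖S‖ :=
            mul_le_mul hst hVx (norm_nonneg _) hδ0.le
        _ ≤ (1-r)/4 := by
            rw [hδdef, div_mul_eq_mul_div, div_le_div_iff₀ (by positivity) (by norm_num)]
            nlinarith [norm_nonneg S]
    have key := banach_taylor_bound (f := f) (c := W t x) (ρ := 1 - r) (M := M)
      h1r (fun y hy => (hfa y (hballW hy)).differentiableAt)
      (fun y hy => hMf y (hballW hy)) (v := Vc x) (μ := (s:ℂ)-(t:ℂ)) hcond
    have harg : W t x + ((s:ℂ)-(t:ℂ)) • Vc x = W s x := by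
      simp only [hWdef, ContinuousLinearMap.add_apply, ContinuousLinearMap.coe_smul',
        Pi.smul_apply]
      module
    rw [harg] at key
    refine key.trans ?_
    rw [hμ]
    have h1 : (|s-t| * ‖Vc x‖)^2 ≤ (|s-t| * (‖S‖+1))^2 := by
      apply pow_le_pow_left₀ (by positivity)
      exact mul_le_mul_of_nonneg_left (hVx.trans (by linarith)) (abs_nonneg _)
    calc (8*M/(1-r)^2) * (|s-t| * ‖Vc x‖)^2
        ≤ (8*M/(1-r)^2) * (|s - t| * (‖S‖+1))^2 := by
          apply mul_le_mul_of_nonneg_left h1 (by positivity)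
      _ = K * (s-t)^2 := by
          rw [hK, mul_pow, sq_abs]
          ring
  set G : ℝ → ℂ := fun t => φ.toFun (g t) with hGdef
  have hGd : ∀ t ∈ Set.Icc (0:ℝ) 1, ∀ s ∈ Set.Icc (0:ℝ) 1, |s-t| ≤ δ →
      ‖G s - G t‖ ≤ (C*K) * (s-t)^2 := by
    intro t ht s hs hst
    set c : ℂ := (s:ℂ) - (t:ℂ) with hc
    set D : X → ℂ := fun x => g s x - g t x - c * a t x with hD
    have hgs := hgMem s hs.1 hs.2
    have hgt := hgMem t ht.1 ht.2
    have hat := haMem t ht.1 ht.2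
    have hDmem : MemAu X D :=
      memAu_sub (memAu_sub hgs hgt) (memAu_const_mul c hat)
    have hE : MemAu X (fun x => g t x + c * a t x) :=
      memAu_add hgt (memAu_const_mul c hat)
    have h2 : (fun x => D x + (g t x + c * a t x)) = g s := by
      funext x
      simp only [hD]
      ring
    have h1 : φ.toFun (g s) = φ.toFun D + φ.toFun (fun x => g t x + c * a t x) := by
      rw [← h2]
      exact char_add' φ hDmem hE
    have h3 : φ.toFun (fun x => g t x + c * a t x)
        = φ.toFun (g t) + c * φ.toFun (a t) := by
      rw [char_add' φ hgt (memAu_const_mul c hat), char_smul' φ c hat]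
    have hza := hφa t ht.1 ht.2
    have hφD : φ.toFun D = G s - G t := by
      rw [h3, hza, mul_zero, add_zero] at h1
      simp only [hGdef]
      rw [h1]
      ring
    have hsup : ∀ x ∈ ball (0:X) 1, ‖D x‖ ≤ K * (s-t)^2 := by
      intro x hx
      exact hTay t ht s hs hst x hx
    have hb := hC D (K*(s-t)^2) hDmem hsup
    rw [hφD] at hb
    refine hb.trans (le_of_eq ?_)
    ring
  have hG10 : G 1 = G 0 := quadratic_const hδ0 hGd
  have hend1 : (fun x => f ((r:ℂ) • x)) = g 1 := by
    funext x
    simp only [hgdef]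
    congr 1
    have h1 : W 1 x = (r:ℂ) • P x + (1:ℂ) • ((r:ℂ) • S x) := by
      have := hWapp 1 x
      push_cast at this
      exact this
    rw [h1]
    have := hPS x
    rw [one_smul, ← smul_add, this]
  have hend0 : (fun x => f ((r:ℂ) • P x)) = g 0 := by
    funext x
    simp only [hgdef]
    congr 1
    have h1 : W 0 x = (r:ℂ) • P x + (0:ℂ) • ((r:ℂ) • S x) := by
      have := hWapp 0 x
      push_cast at this
      exact this
    rw [h1, zero_smul, add_zero]
  rw [hend1, hend0]
  exact hG10

end CVAux

open Metric Filter Topology ClusterValue in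
/-- If `S` is a finite rank operator on `X` such that `P = I - S` has norm one, and `φ` is
a character of `A_u(B)` in the fiber over `0`, then `φ(f) = φ(f ∘ P)` for all `f ∈ A_u(B)`. -/
theorem statement0 {X : Type*} [NormedAddCommGroup X] [NormedSpace ℂ X]
    (S : X →L[ℂ] X) (hS : FiniteRank X S)
    (hP : ‖ContinuousLinearMap.id ℂ X - S‖ = 1)
    (φ : Character X (MemAu X)) (hφ : φ.inFiberZero)
    (f : X → ℂ) (hf : MemAu X f) :
    φ.toFun f = φ.toFun (fun x => f ((ContinuousLinearMap.id ℂ X - S) x)) := by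
  classical
  have hS' : FiniteDimensional ℂ ↥(LinearMap.range (S : X →ₗ[ℂ] X)) := hS
  set P : X →L[ℂ] X := ContinuousLinearMap.id ℂ X - S with hPdef
  have hPn : ∀ x, ‖P x‖ ≤ ‖x‖ := by
    intro x
    have h := P.le_opNorm x
    rw [hP, one_mul] at h
    exact h
  obtain ⟨C, hC0, hC⟩ := CVAux.char_bound φ
  have hfP : MemAu X (fun x => f (P x)) := CVAux.memAu_comp_clm hf P hPn
  suffices h : ∀ ε > (0:ℝ), ‖φ.toFun f - φ.toFun (fun x => f (P x))‖ ≤ ε by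
    by_contra hne
    have hpos : 0 < ‖φ.toFun f - φ.toFun (fun x => f (P x))‖ := by
      rw [norm_pos_iff, sub_ne_zero]
      exact hne
    have := h (‖φ.toFun f - φ.toFun (fun x => f (P x))‖/2) (by positivity)
    linarith
  intro ε hε
  set ε' := ε/(4*C) with hε'
  have hε'0 : 0 < ε' := by positivity
  obtain ⟨δ₀, hδ₀, hucf⟩ := (Metric.uniformContinuousOn_iff_le).1 hf.2.2 ε' hε'0
  set r := max (1 - δ₀/2) (1/2) with hrdef
  have hr0 : (0:ℝ) < r := lt_of_lt_of_le (by norm_num) (le_max_right _ _)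
  have hr1 : r < 1 := by
    apply max_lt
    · linarith
    · norm_num
  have h1rle : 1 - r ≤ δ₀/2 := by
    have := le_max_left (1 - δ₀/2) (1/2)
    rw [hrdef]
    linarith [this]
  have h1r : 1 - r ≤ δ₀ := by linarith
  have hrn : ‖(r:ℂ)‖ = r := by
    rw [Complex.norm_real, Real.norm_eq_abs, abs_of_pos hr0]
  -- membership of the dilated functions
  set T : X →L[ℂ] X := (r:ℂ) • ContinuousLinearMap.id ℂ X with hTdef
  have hTx : ∀ x : X, T x = (r:ℂ) • x := by
    intro x
    simp [hTdef]
  have hTn : ∀ x, ‖T x‖ ≤ ‖x‖ := by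
    intro x
    rw [hTx, norm_smul, hrn]
    nlinarith [norm_nonneg x]
  have hfr : MemAu X (fun x => f ((r:ℂ) • x)) := by
    have := CVAux.memAu_comp_clm hf T hTn
    have he : (fun x => f (T x)) = fun x => f ((r:ℂ) • x) := by
      funext x
      rw [hTx]
    rwa [he] at this
  set T2 : X →L[ℂ] X := (r:ℂ) • P with hT2def
  have hT2x : ∀ x : X, T2 x = (r:ℂ) • P x := by
    intro x
    simp [hT2def]
  have hT2n : ∀ x, ‖T2 x‖ ≤ ‖x‖ := by
    intro x
    rw [hT2x, norm_smul, hrn]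
    nlinarith [norm_nonneg (P x), hPn x, norm_nonneg x]
  have hfrP : MemAu X (fun x => f ((r:ℂ) • P x)) := by
    have := CVAux.memAu_comp_clm hf T2 hT2n
    have he : (fun x => f (T2 x)) = fun x => f ((r:ℂ) • P x) := by
      funext x
      rw [hT2x]
    rwa [he] at this
  -- the key step at fixed r
  have step := CVAux.fixed_r_step S hS' hPn φ hφ hf hr0 hr1
  rw [← hPdef] at step
  -- approximation bounds
  have hd1 : ∀ x ∈ ball (0:X) 1, ‖f x - f ((r:ℂ) • x)‖ ≤ ε' := by
    intro x hx
    have hx1 : ‖x‖ < 1 := mem_ball_zero_iff.1 hx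
    have hmem2 : (r:ℂ) • x ∈ ball (0:X) 1 := by
      rw [mem_ball_zero_iff, norm_smul, hrn]
      nlinarith [norm_nonneg x]
    have hdist : dist x ((r:ℂ) • x) ≤ δ₀ := by
      rw [dist_eq_norm]
      have he : x - (r:ℂ) • x = ((1:ℂ) - (r:ℂ)) • x := by
        rw [sub_smul, one_smul]
      rw [he, norm_smul]
      have h2 : ‖(1:ℂ) - (r:ℂ)‖ = 1 - r := by
        rw [show (1:ℂ) - (r:ℂ) = (((1 - r : ℝ)):ℂ) by push_cast; ring,
          Complex.norm_real, Real.norm_eq_abs, abs_of_nonneg (by linarith)]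
      rw [h2]
      nlinarith [norm_nonneg x]
    have := hucf x hx _ hmem2 hdist
    rw [dist_eq_norm] at this
    exact this
  have hd2 : ∀ x ∈ ball (0:X) 1, ‖f (P x) - f ((r:ℂ) • P x)‖ ≤ ε' := by
    intro x hx
    have hx1 : ‖x‖ < 1 := mem_ball_zero_iff.1 hx
    have hP1 : ‖P x‖ < 1 := lt_of_le_of_lt (hPn x) hx1
    have hmemP : P x ∈ ball (0:X) 1 := mem_ball_zero_iff.2 hP1
    have hmem2 : (r:ℂ) • P x ∈ ball (0:X) 1 := by
      rw [mem_ball_zero_iff, norm_smul, hrn]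
      nlinarith [norm_nonneg (P x)]
    have hdist : dist (P x) ((r:ℂ) • P x) ≤ δ₀ := by
      rw [dist_eq_norm]
      have he : P x - (r:ℂ) • P x = ((1:ℂ) - (r:ℂ)) • P x := by
        rw [sub_smul, one_smul]
      rw [he, norm_smul]
      have h2 : ‖(1:ℂ) - (r:ℂ)‖ = 1 - r := by
        rw [show (1:ℂ) - (r:ℂ) = (((1 - r : ℝ)):ℂ) by push_cast; ring,
          Complex.norm_real, Real.norm_eq_abs, abs_of_nonneg (by linarith)]
      rw [h2]
      nlinarith [norm_nonneg (P x)]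
    have := hucf _ hmemP _ hmem2 hdist
    rw [dist_eq_norm] at this
    exact this
  have hb1 : ‖φ.toFun f - φ.toFun (fun x => f ((r:ℂ) • x))‖ ≤ C * ε' := by
    rw [← CVAux.char_sub' φ hf hfr]
    exact hC _ ε' (CVAux.memAu_sub hf hfr) hd1
  have hb2 : ‖φ.toFun (fun x => f (P x)) - φ.toFun (fun x => f ((r:ℂ) • P x))‖ ≤ C * ε' := by
    rw [← CVAux.char_sub' φ hfP hfrP]
    exact hC _ ε' (CVAux.memAu_sub hfP hfrP) hd2
  have hsplit : φ.toFun f - φ.toFun (fun x => f (P x))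
      = (φ.toFun f - φ.toFun (fun x => f ((r:ℂ) • x)))
        + (φ.toFun (fun x => f ((r:ℂ) • P x)) - φ.toFun (fun x => f (P x))) := by
    rw [step]
    ring
  rw [hsplit]
  have hCe : C * ε' = ε / 4 := by
    rw [hε']
    field_simp
  calc ‖(φ.toFun f - φ.toFun (fun x => f ((r:ℂ) • x)))
        + (φ.toFun (fun x => f ((r:ℂ) • P x)) - φ.toFun (fun x => f (P x)))‖
      ≤ ‖φ.toFun f - φ.toFun (fun x => f ((r:ℂ) • x))‖
        + ‖φ.toFun (fun x => f ((r:ℂ) • P x)) - φ.toFun (fun x => f (P x))‖ :=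
        norm_add_le _ _
    _ ≤ C * ε' + C * ε' := by
        refine add_le_add hb1 ?_
        rw [norm_sub_rev]
        exact hb2
    _ ≤ ε := by
        rw [hCe]
        linarith
end

section
/- There exists a finite rank bounded linear operator S on complex ℓ₂, namely S(x) = (x₁, 0, 0, ...), such that P = I - S has norm one, and there exist a character φ in the fiber M₀(B_{ℓ₂}) of the spectrum of H^∞(B_{ℓ₂}) over 0 and a function f ∈ H^∞(B_{ℓ₂}), namely f(x) = x₁ / √(1 - Σ_{j≥2} x_j²) (principal branch of the square root), such that φ(f) = 1 while φ(f ∘ P) = 0; in particular f̂(φ) ≠ (f ∘ P)^(φ). -/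
open Metric Filter Topology

set_option synthInstance.maxHeartbeats 1000000
set_option maxHeartbeats 1000000

noncomputable section AronAux
open Metric Filter Topology ENNReal
open scoped ComplexInnerProductSpace

abbrev X2 : Type := lp (fun _ : ℕ => ℂ) 2

def coord0 : X2 →L[ℂ] ℂ :=
  LinearMap.mkContinuous
    { toFun := fun x => x 0
      map_add' := fun x y => by simp [lp.coeFn_add]
      map_smul' := fun c x => by simp [lp.coeFn_smul] }
    1 (fun x => by rw [one_mul]; exact lp.norm_apply_le_norm (two_ne_zero) x 0)

def e2 (i : ℕ) : X2 := lp.single 2 i 1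

def S2 : X2 →L[ℂ] X2 := coord0.smulRight (e2 0)

lemma S2_apply (x : X2) (n : ℕ) : S2 x n = if n = 0 then x 0 else 0 := by
  have h1 : S2 x = (x 0) • (e2 0) := rfl
  rw [h1, lp.coeFn_smul, Pi.smul_apply]
  rcases eq_or_ne n 0 with h | h
  · subst h; simp [e2, lp.single_apply_self]
  · rw [if_neg h]; exact mul_eq_zero.mpr (Or.inr (lp.single_apply_ne 2 0 _ h))

lemma norm_e2 (i : ℕ) : ‖e2 i‖ = 1 := by
  have := lp.norm_single (E := fun _ : ℕ => ℂ) (p := 2) (by norm_num) i (1:ℂ)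
  simpa [e2] using this

lemma S2_finiteRank : FiniteDimensional ℂ ↥(LinearMap.range (S2 : X2 →ₗ[ℂ] X2)) := by
  have hle : LinearMap.range (S2 : X2 →ₗ[ℂ] X2) ≤ Submodule.span ℂ {e2 0} := by
    rintro y ⟨x, rfl⟩
    exact Submodule.smul_mem _ _ (Submodule.mem_span_singleton_self _)
  exact Submodule.finiteDimensional_of_le hle


def P2 : X2 →L[ℂ] X2 := ContinuousLinearMap.id ℂ X2 - S2

lemma P2_apply (x : X2) : P2 x = x - (x 0) • e2 0 := rfl

lemma norm_P2_le (x : X2) : ‖P2 x‖ ≤ ‖x‖ := by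
  have horth : (inner ℂ (P2 x) ((x 0) • e2 0) : ℂ) = 0 := by
    rw [inner_smul_right]
    have : (inner ℂ (P2 x) (e2 0) : ℂ) = (starRingEnd ℂ) ((P2 x) 0) := by
      rw [e2, lp.inner_single_right]; simp [RCLike.inner_apply]
    rw [this]
    have h0 : (P2 x) 0 = 0 := by
      rw [P2_apply, lp.coeFn_sub, Pi.sub_apply, lp.coeFn_smul, Pi.smul_apply]
      simp [e2, lp.single_apply_self]
    rw [h0]; simp
  have hdecomp : x = P2 x + (x 0) • e2 0 := by rw [P2_apply]; abel
  have hsq : ‖x‖ ^ 2 = ‖P2 x‖ ^ 2 + ‖(x 0) • e2 0‖ ^ 2 := by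
    conv_lhs => rw [hdecomp]
    simp only [pow_two]
    rw [norm_add_sq_eq_norm_sq_add_norm_sq_of_inner_eq_zero _ _ horth]
  nlinarith [norm_nonneg (P2 x), norm_nonneg x, norm_nonneg ((x 0) • e2 0), sq_nonneg ‖(x 0) • e2 0‖]

lemma norm_P2 : ‖P2‖ = 1 := by
  refine le_antisymm (ContinuousLinearMap.opNorm_le_bound _ zero_le_one (fun x => by simpa using norm_P2_le x)) ?_
  have h1 : P2 (e2 1) = e2 1 := by
    rw [P2_apply]
    have : (e2 1) 0 = 0 := lp.single_apply_ne 2 1 _ (by norm_num)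
    rw [this]; simp
  have := P2.le_opNorm (e2 1)
  rw [h1, norm_e2] at this
  simpa using this

lemma conj2 : (2:ℝ≥0∞).toReal.HolderConjugate (2:ℝ≥0∞).toReal := by
  rw [Real.holderConjugate_iff] <;> norm_num

lemma summable_mul_norm (x y : X2) : Summable fun i => ‖x i‖ * ‖y i‖ :=
  lp.summable_mul conj2 x y

lemma summable_mul2 (x y : X2) : Summable fun i => x i * y i :=
  Summable.of_norm (by simpa [norm_mul] using summable_mul_norm x y)

def Dlin : X2 →ₗ[ℂ] X2 →ₗ[ℂ] ℂ where
  toFun x :=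
    { toFun := fun y => ∑' i, x i * y i
      map_add' := fun y z => by
        simp only [lp.coeFn_add, Pi.add_apply, mul_add]
        exact Summable.tsum_add (summable_mul2 x y) (summable_mul2 x z)
      map_smul' := fun c y => by
        simp only [lp.coeFn_smul, Pi.smul_apply, smul_eq_mul, RingHom.id_apply]
        rw [← tsum_mul_left]
        congr 1; funext i; ring }
  map_add' x y := by
    ext z
    simp only [lp.coeFn_add, Pi.add_apply, add_mul, LinearMap.coe_mk, AddHom.coe_mk,
      LinearMap.add_apply]
    exact Summable.tsum_add (summable_mul2 x z) (summable_mul2 y z)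
  map_smul' c x := by
    ext z
    simp only [lp.coeFn_smul, Pi.smul_apply, smul_eq_mul, RingHom.id_apply, LinearMap.coe_mk,
      AddHom.coe_mk, LinearMap.smul_apply]
    rw [← tsum_mul_left]
    congr 1; funext i; ring

lemma Dlin_bound (x y : X2) : ‖Dlin x y‖ ≤ 1 * ‖x‖ * ‖y‖ := by
  rw [one_mul]
  calc ‖∑' i, x i * y i‖ ≤ ∑' i, ‖x i * y i‖ :=
        norm_tsum_le_tsum_norm (by simpa [norm_mul] using summable_mul_norm x y)
    _ = ∑' i, ‖x i‖ * ‖y i‖ := by simp [norm_mul]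
    _ ≤ ‖x‖ * ‖y‖ := lp.tsum_mul_le_mul_norm' conj2 x y

def D2 : X2 →L[ℂ] X2 →L[ℂ] ℂ := LinearMap.mkContinuous₂ Dlin 1 Dlin_bound

lemma D2_apply (x y : X2) : D2 x y = ∑' i, x i * y i := rfl

def g2 : X2 → ℂ := fun x => ∑' j : ℕ, (x (j+1))^2

lemma P2_coe (x : X2) (n : ℕ) : (P2 x) n = if n = 0 then 0 else x n := by
  have : P2 x = x - S2 x := rfl
  rw [this, lp.coeFn_sub, Pi.sub_apply, S2_apply]
  rcases eq_or_ne n 0 with h | h <;> simp [h]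

lemma g2_eq (x : X2) : g2 x = D2 (P2 x) (P2 x) := by
  rw [D2_apply]
  have hsumm : Summable fun i => (P2 x) i * (P2 x) i := summable_mul2 _ _
  rw [Summable.tsum_eq_zero_add hsumm]
  have h0 : (P2 x) 0 * (P2 x) 0 = 0 := by rw [P2_coe]; simp
  rw [h0, zero_add, g2]
  congr 1; funext j
  rw [P2_coe]; simp [pow_two]

lemma g2_analytic : AnalyticOnNhd ℂ g2 Set.univ := by
  have h1 : AnalyticOnNhd ℂ (fun p : X2 × X2 => D2 p.1 p.2) Set.univ :=
    fun p _ => D2.analyticAt_bilinear p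
  have h2 : AnalyticOnNhd ℂ (fun x : X2 => (P2 x, P2 x)) Set.univ :=
    fun x _ => ((P2.prod P2).analyticAt x)
  have := h1.comp h2 (fun x _ => Set.mem_univ _)
  intro x hx
  exact (this x hx).congr (by filter_upwards with y; rw [g2_eq]; rfl)

lemma hasSum_norm2 (x : X2) : HasSum (fun i => ‖x i‖ ^ 2) (‖x‖ ^ 2) := by
  have := lp.hasSum_norm (p := 2) (by norm_num) x
  have h2 : ((2:ℝ≥0∞)).toReal = ((2:ℕ):ℝ) := by norm_num
  simpa [h2, Real.rpow_natCast] using this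

lemma tsum_tail_norm (x : X2) : ∑' j : ℕ, ‖x (j+1)‖ ^ 2 = ‖x‖ ^ 2 - ‖x 0‖ ^ 2 := by
  have h := (hasSum_norm2 x).tsum_eq
  have hs := (hasSum_norm2 x).summable
  rw [Summable.tsum_eq_zero_add hs] at h
  linarith [h]

lemma g2_norm_bound (x : X2) : ‖g2 x‖ ≤ ‖x‖ ^ 2 - ‖x 0‖ ^ 2 := by
  have hsum : Summable fun j : ℕ => ‖(x (j+1)) ^ 2‖ := by
    have h1 : Summable fun i : ℕ => ‖x i‖ * ‖x i‖ := summable_mul_norm x x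
    have h2 : Summable fun j : ℕ => ‖x (j+1)‖ * ‖x (j+1)‖ :=
      h1.comp_injective (add_left_injective 1)
    simpa [norm_pow, pow_two] using h2
  calc ‖g2 x‖ ≤ ∑' j : ℕ, ‖(x (j+1)) ^ 2‖ := norm_tsum_le_tsum_norm hsum
    _ = ∑' j : ℕ, ‖x (j+1)‖ ^ 2 := by simp [norm_pow]
    _ = ‖x‖ ^ 2 - ‖x 0‖ ^ 2 := tsum_tail_norm x

lemma re_sub_g2 (x : X2) (hx : x ∈ ball (0 : X2) 1) :
    ‖x 0‖ ^ 2 < (1 - g2 x).re := by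
  rw [mem_ball_zero_iff] at hx
  have h2 := g2_norm_bound x
  have h3 : ‖x‖ ^ 2 < 1 := by nlinarith [norm_nonneg x]
  have : (1 - g2 x).re = 1 - (g2 x).re := by simp [Complex.sub_re]
  have h4 : (g2 x).re ≤ ‖g2 x‖ := Complex.re_le_norm _
  rw [this]
  have : ‖g2 x‖ = ‖g2 x‖ := rfl
  nlinarith [h4, h2, this ▸ h2]

lemma one_sub_g2_slit (x : X2) (hx : x ∈ ball (0 : X2) 1) :
    (1 - g2 x) ∈ Complex.slitPlane := by
  rw [Complex.mem_slitPlane_iff]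
  left
  exact lt_of_le_of_lt (sq_nonneg ‖x 0‖) (re_sub_g2 x hx)

def f2 : X2 → ℂ := fun x => x 0 / ((1 - ∑' j : ℕ, (x (j+1))^2) ^ ((1:ℂ)/2))

lemma f2_eq (x : X2) : f2 x = x 0 / ((1 - g2 x) ^ ((1:ℂ)/2)) := rfl

lemma f2_analytic : AnalyticOnNhd ℂ f2 (ball (0 : X2) 1) := by
  have hnum : AnalyticOnNhd ℂ (fun x : X2 => (x 0 : ℂ)) (ball (0 : X2) 1) := by
    intro x _
    exact (coord0.analyticAt x).congr (by filter_upwards with y; rfl)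
  have hbase : AnalyticOnNhd ℂ (fun x : X2 => 1 - g2 x) (ball (0 : X2) 1) :=
    analyticOnNhd_const.sub (fun x hx => g2_analytic x (Set.mem_univ x))
  have hden : AnalyticOnNhd ℂ (fun x : X2 => (1 - g2 x) ^ ((1:ℂ)/2)) (ball (0 : X2) 1) :=
    hbase.cpow analyticOnNhd_const one_sub_g2_slit
  have hne : ∀ x ∈ ball (0 : X2) 1, (1 - g2 x) ^ ((1:ℂ)/2) ≠ 0 := by
    intro x hx
    have hz : (1 - g2 x) ≠ 0 := by
      intro h
      have := re_sub_g2 x hx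
      rw [h] at this
      simp at this
      nlinarith [sq_nonneg ‖x 0‖]
    simp [Complex.cpow_eq_zero_iff, hz]
  exact hnum.div hden hne

lemma f2_bound : ∀ x ∈ ball (0 : X2) 1, ‖f2 x‖ ≤ 1 := by
  intro x hx
  rw [f2_eq, norm_div]
  have hre := re_sub_g2 x hx
  have hz : ‖1 - g2 x‖ ≠ 0 := by
    intro h
    have : (1 - g2 x) = 0 := by exact norm_eq_zero.mp h
    rw [this] at hre
    simp at hre
    nlinarith [sq_nonneg ‖x 0‖]
  have habs : ‖(1 - g2 x) ^ ((1:ℂ)/2)‖ = ‖1 - g2 x‖ ^ ((1:ℝ)/2) := by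
    rw [Complex.norm_cpow_of_ne_zero (by
      intro h; rw [h] at hz; simp at hz)]
    norm_num
  rw [habs]
  have hge : ‖x 0‖ ^ 2 ≤ ‖1 - g2 x‖ :=
    le_trans hre.le (Complex.re_le_norm _)
  have habs_pos : 0 < ‖1 - g2 x‖ := by
    have := norm_nonneg (1 - g2 x)
    exact lt_of_le_of_ne this (Ne.symm hz)
  have hsqrt : ‖x 0‖ ≤ ‖1 - g2 x‖ ^ ((1:ℝ)/2) := by
    have h1 : ‖x 0‖ = (‖x 0‖ ^ 2) ^ ((1:ℝ)/2) := by
      rw [← Real.rpow_natCast (‖x 0‖) 2, ← Real.rpow_mul (norm_nonneg _)]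
      norm_num
    rw [h1]
    exact Real.rpow_le_rpow (sq_nonneg _) hge (by norm_num)
  exact div_le_one_of_le₀ hsqrt (Real.rpow_nonneg habs_pos.le _)

lemma f2_memHinf : AnalyticOn ℂ f2 (ball (0 : X2) 1) ∧
    (∃ C : ℝ, ∀ x ∈ ball (0 : X2) 1, ‖f2 x‖ ≤ C) :=
  ⟨f2_analytic.analyticOn, 1, f2_bound⟩

-- the sequence
def aa (n : ℕ) : ℝ := (1:ℝ) / ((n:ℝ) + 2)
def bb (n : ℕ) : ℝ := Real.sqrt (1 - aa n ^ 2 - aa n ^ 4)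

lemma aa_pos (n : ℕ) : 0 < aa n := by rw [aa]; positivity
lemma aa_le (n : ℕ) : aa n ≤ 1/2 := by
  rw [aa, div_le_div_iff₀ (by positivity) (by norm_num)]
  have : (0:ℝ) ≤ n := Nat.cast_nonneg n
  linarith

lemma inner_pos (n : ℕ) : 0 < 1 - aa n ^ 2 - aa n ^ 4 := by
  have h1 := aa_pos n
  have h2 := aa_le n
  have h3 : aa n ^ 2 ≤ 1/4 := by nlinarith
  have h4 : aa n ^ 4 ≤ 1/16 := by nlinarith [sq_nonneg (aa n), sq_nonneg (aa n ^ 2)]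
  linarith

lemma bb_sq (n : ℕ) : bb n ^ 2 = 1 - aa n ^ 2 - aa n ^ 4 :=
  Real.sq_sqrt (inner_pos n).le

lemma bb_nonneg (n : ℕ) : 0 ≤ bb n := Real.sqrt_nonneg _

def xseq (n : ℕ) : X2 := (aa n : ℂ) • e2 0 + (bb n : ℂ) • e2 (n+1)

lemma e2_apply (i j : ℕ) : (e2 i) j = if j = i then 1 else 0 := by
  rcases eq_or_ne j i with h | h
  · subst h; simp [e2, lp.single_apply_self]
  · rw [if_neg h]; exact lp.single_apply_ne 2 i _ h

lemma xseq_apply (n m : ℕ) :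
    (xseq n) m = if m = 0 then (aa n : ℂ) else if m = n+1 then (bb n : ℂ) else 0 := by
  rw [xseq, lp.coeFn_add, Pi.add_apply, lp.coeFn_smul, Pi.smul_apply, lp.coeFn_smul,
    Pi.smul_apply, e2_apply, e2_apply]
  rcases eq_or_ne m 0 with h | h
  · subst h; simp
  · rw [if_neg h, if_neg h]
    rcases eq_or_ne m (n+1) with h2 | h2
    · subst h2; simp
    · simp [h2]

lemma inner_e2 (i j : ℕ) (hij : i ≠ j) : (inner ℂ (e2 i) (e2 j) : ℂ) = 0 := by
  show (inner ℂ (e2 i) (lp.single (E := fun _ : ℕ => ℂ) 2 j (1:ℂ)) : ℂ) = 0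
  rw [lp.inner_single_right]
  have : (e2 i) j = 0 := by rw [e2_apply, if_neg (Ne.symm hij)]
  simp [RCLike.inner_apply, this]

lemma norm_xseq_sq (n : ℕ) : ‖xseq n‖ ^ 2 = aa n ^ 2 + bb n ^ 2 := by
  have horth : (inner ℂ ((aa n : ℂ) • e2 0) ((bb n : ℂ) • e2 (n+1)) : ℂ) = 0 := by
    rw [inner_smul_left, inner_smul_right, inner_e2 0 (n+1) (by norm_num)]
    ring
  rw [xseq]
  simp only [pow_two]
  rw [norm_add_sq_eq_norm_sq_add_norm_sq_of_inner_eq_zero _ _ horth]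
  simp only [← pow_two]
  simp only [norm_smul, norm_e2, mul_one, Complex.norm_real]
  rw [Real.norm_eq_abs, Real.norm_eq_abs, abs_of_pos (aa_pos n), abs_of_nonneg (bb_nonneg n)]

lemma xseq_mem_ball (n : ℕ) : xseq n ∈ ball (0 : X2) 1 := by
  rw [mem_ball_zero_iff]
  have h : ‖xseq n‖ ^ 2 < 1 := by
    rw [norm_xseq_sq, bb_sq]
    have := pow_pos (aa_pos n) 4
    linarith
  have h1 : ‖xseq n‖ ^ 2 < 1 ^ 2 := by simpa using h
  exact lt_of_pow_lt_pow_left₀ 2 zero_le_one h1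

lemma g2_xseq (n : ℕ) : g2 (xseq n) = (bb n : ℂ) ^ 2 := by
  rw [g2]
  rw [tsum_eq_single n]
  · rw [xseq_apply]; simp
  · intro j hj
    rw [xseq_apply]
    simp only [Nat.succ_ne_zero, if_false]
    rw [if_neg (by omega), zero_pow (by norm_num)]

lemma f2_xseq (n : ℕ) :
    f2 (xseq n) = ((aa n / (aa n ^ 2 + aa n ^ 4) ^ ((1:ℝ)/2) : ℝ) : ℂ) := by
  rw [f2_eq, g2_xseq, xseq_apply]
  simp only [if_pos rfl]
  have hb : ((bb n : ℂ))^2 = ((bb n ^ 2 : ℝ) : ℂ) := by push_cast; ring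
  rw [hb, bb_sq]
  have h1 : (1 : ℂ) - ((1 - aa n ^ 2 - aa n ^ 4 : ℝ) : ℂ) = ((aa n ^ 2 + aa n ^ 4 : ℝ) : ℂ) := by
    push_cast; ring
  rw [h1]
  have hpos : (0:ℝ) ≤ aa n ^ 2 + aa n ^ 4 := by positivity
  rw [show ((1:ℂ)/2) = (((1:ℝ)/2 : ℝ) : ℂ) by norm_num]
  rw [← Complex.ofReal_cpow hpos]
  push_cast
  ring

lemma P2_xseq (n : ℕ) : P2 (xseq n) = (bb n : ℂ) • e2 (n+1) := by
  have h : P2 (xseq n) = xseq n - ((xseq n) 0) • e2 0 := rfl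
  rw [h]
  have h0 : (xseq n) 0 = (aa n : ℂ) := by rw [xseq_apply]; simp
  rw [h0, xseq]
  abel

lemma f2_P2_xseq (n : ℕ) : f2 (P2 (xseq n)) = 0 := by
  rw [P2_xseq, f2_eq]
  have h0 : ((bb n : ℂ) • e2 (n+1) : X2) 0 = 0 := by
    rw [lp.coeFn_smul, Pi.smul_apply, e2_apply]
    simp
  rw [h0, zero_div]

lemma aa_tendsto : Tendsto aa atTop (𝓝 0) := by
  have : Tendsto (fun n : ℕ => ((n:ℝ) + 2)) atTop atTop := by
    exact tendsto_natCast_atTop_atTop.atTop_add tendsto_const_nhds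
  have h := this.inv_tendsto_atTop
  have h2 : aa = (fun n : ℕ => ((n:ℝ) + 2))⁻¹ := by
    funext n; simp [aa, Pi.inv_apply, one_div]
  rw [h2]; exact h

lemma f2_xseq_tendsto : Tendsto (fun n => f2 (xseq n)) atTop (𝓝 1) := by
  have key : ∀ n, aa n / (aa n ^ 2 + aa n ^ 4) ^ ((1:ℝ)/2) = 1 / (1 + aa n ^ 2) ^ ((1:ℝ)/2) := by
    intro n
    have ha := aa_pos n
    have h1 : aa n ^ 2 + aa n ^ 4 = aa n ^ 2 * (1 + aa n ^ 2) := by ring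
    rw [h1, Real.mul_rpow (by positivity) (by positivity)]
    have h2 : (aa n ^ 2) ^ ((1:ℝ)/2) = aa n := by
      rw [← Real.rpow_natCast (aa n) 2, ← Real.rpow_mul ha.le]
      norm_num
    rw [h2, div_mul_eq_div_div_swap, div_right_comm, div_self ha.ne']
  have hreal : Tendsto (fun n => aa n / (aa n ^ 2 + aa n ^ 4) ^ ((1:ℝ)/2)) atTop (𝓝 1) := by
    simp only [key]
    have h3 : Tendsto (fun n => 1 + aa n ^ 2) atTop (𝓝 1) := by
      have := (aa_tendsto.pow 2)
      simpa using (tendsto_const_nhds (x := (1:ℝ))).add this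
    have h4 : Tendsto (fun n => (1 + aa n ^ 2) ^ ((1:ℝ)/2)) atTop (𝓝 1) := by
      have := (Real.continuousAt_rpow_const 1 ((1:ℝ)/2) (Or.inl one_ne_zero)).tendsto.comp h3
      simpa [Function.comp_def] using this
    simp only [one_div]
    simpa using h4.inv₀ one_ne_zero
  have hC := (Complex.continuous_ofReal.tendsto 1).comp hreal
  have heq : (fun n => f2 (xseq n)) =
      (Complex.ofReal ∘ fun n => aa n / (aa n ^ 2 + aa n ^ 4) ^ ((1:ℝ)/2)) := by
    funext n; rw [f2_xseq]; rfl
  rw [heq]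
  simpa using hC

lemma bb_le_one (n : ℕ) : bb n ≤ 1 := by
  rw [bb]
  have h := Real.sqrt_le_sqrt (show 1 - aa n ^ 2 - aa n ^ 4 ≤ 1 by nlinarith [sq_nonneg (aa n), sq_nonneg (aa n ^ 2), pow_pos (aa_pos n) 4])
  simpa using h

lemma weak_null (ψ : X2 →L[ℂ] ℂ) : Tendsto (fun n => ψ (xseq n)) atTop (𝓝 0) := by
  -- Riesz representation
  obtain ⟨v, rfl⟩ := (InnerProductSpace.toDual ℂ X2).surjective ψ
  have hv : ∀ m : ℕ, (InnerProductSpace.toDual ℂ X2 v) (e2 m) = (starRingEnd ℂ) (v m) := by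
    intro m
    rw [InnerProductSpace.toDual_apply_apply]
    show (inner ℂ v (lp.single (E := fun _ : ℕ => ℂ) 2 m (1:ℂ)) : ℂ) = _
    rw [lp.inner_single_right]
    simp [RCLike.inner_apply]
  -- ‖v m‖ → 0
  have hsum : Summable fun m : ℕ => ‖v m‖ * ‖v m‖ := summable_mul_norm v v
  have hnorm0 : Tendsto (fun m => ‖v m‖) atTop (𝓝 0) := by
    have h1 := hsum.tendsto_atTop_zero
    have h2 : Tendsto (fun m => Real.sqrt (‖v m‖ * ‖v m‖)) atTop (𝓝 0) := by
      have h2' := (Real.continuous_sqrt.tendsto 0).comp h1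
      rw [Real.sqrt_zero] at h2'
      exact h2'
    have h3 : (fun m => Real.sqrt (‖v m‖ * ‖v m‖)) = fun m => ‖v m‖ := by
      funext m; exact Real.sqrt_mul_self (norm_nonneg _)
    rwa [h3] at h2
  -- decompose
  have happ : ∀ n, (InnerProductSpace.toDual ℂ X2 v) (xseq n) =
      (aa n : ℂ) * (starRingEnd ℂ) (v 0) + (bb n : ℂ) * (starRingEnd ℂ) (v (n+1)) := by
    intro n
    rw [xseq, map_add, map_smul, map_smul, hv, hv]
    simp [smul_eq_mul]
  simp only [happ]
  have hterm1 : Tendsto (fun n => (aa n : ℂ) * (starRingEnd ℂ) (v 0)) atTop (𝓝 0) := by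
    have := (Complex.continuous_ofReal.tendsto 0).comp aa_tendsto
    simpa using this.mul_const ((starRingEnd ℂ) (v 0))
  have hterm2 : Tendsto (fun n => (bb n : ℂ) * (starRingEnd ℂ) (v (n+1))) atTop (𝓝 0) := by
    refine squeeze_zero_norm (fun n => ?_) (hnorm0.comp (tendsto_add_atTop_nat 1))
    · 
      rw [norm_mul]
      have h1 : ‖((bb n : ℝ) : ℂ)‖ ≤ 1 := by
        rw [Complex.norm_real, Real.norm_eq_abs, abs_of_nonneg (bb_nonneg n)]
        exact bb_le_one n
      have h2 : ‖(starRingEnd ℂ) (v (n+1))‖ = ‖v (n+1)‖ := by simp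
      calc ‖((bb n : ℝ) : ℂ)‖ * ‖(starRingEnd ℂ) (v (n+1))‖ ≤ 1 * ‖(starRingEnd ℂ) (v (n+1))‖ :=
            mul_le_mul_of_nonneg_right h1 (norm_nonneg _)
        _ = ‖v (n+1)‖ := by rw [one_mul, h2]
  simpa using hterm1.add hterm2

def UU : Ultrafilter ℕ := Ultrafilter.of atTop

lemma UU_le : (UU : Filter ℕ) ≤ atTop := Ultrafilter.of_le _

lemma UU_neBot : (UU : Filter ℕ).NeBot := Ultrafilter.neBot _

def Phi (h : X2 → ℂ) : ℂ := limUnder (UU : Filter ℕ) (fun n => h (xseq n))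

lemma Phi_tendsto_of_bounded (h : X2 → ℂ) (M : ℝ) (hb : ∀ n, ‖h (xseq n)‖ ≤ M) :
    Tendsto (fun n => h (xseq n)) (UU : Filter ℕ) (𝓝 (Phi h)) := by
  apply tendsto_nhds_limUnder
  have hmem : closedBall (0 : ℂ) M ∈ (UU.map (fun n => h (xseq n)) : Filter ℂ) := by
    rw [Ultrafilter.mem_coe, Ultrafilter.mem_map]
    have : ∀ n : ℕ, n ∈ {n | h (xseq n) ∈ closedBall (0:ℂ) M} := by
      intro n; simp only [Set.mem_setOf_eq, mem_closedBall_zero_iff]; exact hb n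
    exact Filter.univ_mem' this
  obtain ⟨z, _, hz⟩ := (isCompact_closedBall (0:ℂ) M).ultrafilter_le_nhds
    (UU.map (fun n => h (xseq n))) (le_principal_iff.mpr hmem)
  exact ⟨z, hz⟩

lemma Phi_tendsto_of_mem {h : X2 → ℂ}
    (hb : ∃ C : ℝ, ∀ x ∈ ball (0 : X2) 1, ‖h x‖ ≤ C) :
    Tendsto (fun n => h (xseq n)) (UU : Filter ℕ) (𝓝 (Phi h)) := by
  obtain ⟨C, hC⟩ := hb
  exact Phi_tendsto_of_bounded h C (fun n => hC _ (xseq_mem_ball n))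

lemma Phi_eq_of_tendsto {h : X2 → ℂ} {z : ℂ} (ht : Tendsto (fun n => h (xseq n)) atTop (𝓝 z)) :
    Phi h = z := by
  haveI := UU_neBot
  exact (ht.mono_left UU_le).limUnder_eq

lemma Phi_f2 : Phi f2 = 1 := Phi_eq_of_tendsto f2_xseq_tendsto

lemma Phi_f2_P2 : Phi (fun x => f2 (P2 x)) = 0 := by
  apply Phi_eq_of_tendsto
  have : (fun n => f2 (P2 (xseq n))) = fun _ => (0:ℂ) := funext fun n => f2_P2_xseq n
  rw [this]
  exact tendsto_const_nhds

lemma Phi_clm (ψ : X2 →L[ℂ] ℂ) : Phi ψ = 0 := Phi_eq_of_tendsto (weak_null ψ)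

section CharTest
lemma phi_add (f g : X2 → ℂ) (hf : ∃ C : ℝ, ∀ x ∈ ball (0 : X2) 1, ‖f x‖ ≤ C)
    (hg : ∃ C : ℝ, ∀ x ∈ ball (0 : X2) 1, ‖g x‖ ≤ C) : Phi (f + g) = Phi f + Phi g := by
  haveI := UU_neBot
  have h1 := Phi_tendsto_of_mem hf
  have h2 := Phi_tendsto_of_mem hg
  have h3 : Tendsto (fun n => (f + g) (xseq n)) (UU : Filter ℕ) (𝓝 (Phi f + Phi g)) := by
    simpa [Pi.add_apply] using h1.add h2
  exact h3.limUnder_eq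

lemma phi_mul (f g : X2 → ℂ) (hf : ∃ C : ℝ, ∀ x ∈ ball (0 : X2) 1, ‖f x‖ ≤ C)
    (hg : ∃ C : ℝ, ∀ x ∈ ball (0 : X2) 1, ‖g x‖ ≤ C) : Phi (f * g) = Phi f * Phi g := by
  haveI := UU_neBot
  have h1 := Phi_tendsto_of_mem hf
  have h2 := Phi_tendsto_of_mem hg
  have h3 : Tendsto (fun n => (f * g) (xseq n)) (UU : Filter ℕ) (𝓝 (Phi f * Phi g)) := by
    simpa [Pi.mul_apply] using h1.mul h2
  exact h3.limUnder_eq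

lemma phi_smul (c : ℂ) (f : X2 → ℂ) (hf : ∃ C : ℝ, ∀ x ∈ ball (0 : X2) 1, ‖f x‖ ≤ C) :
    Phi (c • f) = c * Phi f := by
  haveI := UU_neBot
  have h1 := Phi_tendsto_of_mem hf
  have h3 : Tendsto (fun n => (c • f) (xseq n)) (UU : Filter ℕ) (𝓝 (c * Phi f)) := by
    simpa [Pi.smul_apply, smul_eq_mul] using h1.const_mul c
  exact h3.limUnder_eq

lemma phi_one : Phi (1 : X2 → ℂ) = 1 := by
  haveI := UU_neBot
  exact (tendsto_const_nhds (x := (1:ℂ))).limUnder_eq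

lemma phi_congr (f g : X2 → ℂ) (h : ∀ x ∈ ball (0 : X2) 1, f x = g x) : Phi f = Phi g := by
  have : (fun n => f (xseq n)) = (fun n => g (xseq n)) :=
    funext fun n => h _ (xseq_mem_ball n)
  unfold Phi; rw [this]

lemma phi_norm_le (f : X2 → ℂ) (M : ℝ) (hM : ∀ x ∈ ball (0 : X2) 1, ‖f x‖ ≤ M) :
    ‖Phi f‖ ≤ 1 * M := by
  haveI := UU_neBot
  have h1 := Phi_tendsto_of_bounded f M (fun n => hM _ (xseq_mem_ball n))
  have := le_of_tendsto h1.norm (Filter.Eventually.of_forall fun n => hM _ (xseq_mem_ball n))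
  simpa using this
end CharTest

open ClusterValue in
noncomputable def phiChar : Character X2 (MemHinf X2) where
  toFun := Phi
  congr' := fun f g _ _ h => phi_congr f g h
  map_add' := fun f g hf hg => phi_add f g hf.2 hg.2
  map_mul' := fun f g hf hg => phi_mul f g hf.2 hg.2
  map_smul' := fun c f hf => phi_smul c f hf.2
  map_one' := phi_one
  continuous' := ⟨1, fun f M _ hM => phi_norm_le f M hM⟩

end AronAux

open Metric Filter Topology ClusterValue in
/-- Aron's example: there is a finite rank operator `S` on `ℓ₂`, namely
`S x = (x₁, 0, 0, …)`, with `‖I - S‖ = 1`, a character `φ` of `H^∞(B_{ℓ₂})` in the fiber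
over `0`, and `f ∈ H^∞(B_{ℓ₂})`, namely `f x = x₁ / √(1 - ∑_{j ≥ 2} x_j²)` (principal
branch), such that `φ(f) = 1` while `φ(f ∘ P) = 0`; in particular `φ(f) ≠ φ(f ∘ P)`. -/
theorem statement2 :
    ∃ S : lp (fun _ : ℕ => ℂ) 2 →L[ℂ] lp (fun _ : ℕ => ℂ) 2,
      (∀ (x : lp (fun _ : ℕ => ℂ) 2) (n : ℕ), S x n = if n = 0 then x 0 else 0) ∧
      FiniteRank (lp (fun _ : ℕ => ℂ) 2) S ∧
      ‖ContinuousLinearMap.id ℂ (lp (fun _ : ℕ => ℂ) 2) - S‖ = 1 ∧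
      ∃ f : lp (fun _ : ℕ => ℂ) 2 → ℂ, MemHinf (lp (fun _ : ℕ => ℂ) 2) f ∧
        (∀ x ∈ ball (0 : lp (fun _ : ℕ => ℂ) 2) 1,
          f x = x 0 / ((1 - ∑' j : ℕ, (x (j + 1)) ^ 2) ^ ((1 : ℂ) / 2))) ∧
        ∃ φ : Character (lp (fun _ : ℕ => ℂ) 2) (MemHinf (lp (fun _ : ℕ => ℂ) 2)),
          φ.inFiberZero ∧
          φ.toFun f = 1 ∧
          φ.toFun (fun x => f ((ContinuousLinearMap.id ℂ (lp (fun _ : ℕ => ℂ) 2) - S) x)) = 0 ∧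
          φ.toFun f ≠
            φ.toFun (fun x => f ((ContinuousLinearMap.id ℂ (lp (fun _ : ℕ => ℂ) 2) - S) x)) := by
  classical
  refine ⟨S2, S2_apply, S2_finiteRank, norm_P2, f2,
    ⟨f2_analytic.analyticOn, 1, f2_bound⟩, fun x _ => rfl, phiChar,
    fun ψ => Phi_clm ψ, Phi_f2, Phi_f2_P2, ?_⟩
  show Phi f2 ≠ Phi (fun x => f2 (P2 x))
  rw [Phi_f2, Phi_f2_P2]
  exact one_ne_zero
end

section
/- If X is a complex Banach space with a shrinking reverse monotone finite dimensional decomposition, i.e. a shrinking FDD whose canonical partial sum projections P_n satisfy ‖I - P_n‖ = 1 for all n, then the cluster value theorem holds for A_u(B) at 0: for every f ∈ A_u(B), Cl_B(f, 0) = f̂(M₀(B)). -/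
open Metric Filter Topology

namespace ClusterValue

variable (X : Type*) [NormedAddCommGroup X] [NormedSpace ℂ X]

variable {X}

variable (X)

namespace CVAux

variable {X}



lemma ucOn_of_lip {g : X → ℂ} {s : Set X} {L : ℝ}
    (h : ∀ x ∈ s, ∀ y ∈ s, dist (g x) (g y) ≤ L * dist x y) :
    UniformContinuousOn g s := by
  refine (LipschitzOnWith.of_dist_le_mul (K := Real.toNNReal L) ?_).uniformContinuousOn
  intro x hx y hy
  refine (h x hx y hy).trans (mul_le_mul_of_nonneg_right ?_ dist_nonneg)
  rw [Real.coe_toNNReal']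
  exact le_max_left _ _

lemma ucOn_of_uc {f : X → ℂ} (h : UniformContinuous f) (s : Set X) :
    UniformContinuousOn f s :=
  Filter.Tendsto.mono_left h inf_le_left

lemma ucOn_add {f g : X → ℂ} {s : Set X} (hf : UniformContinuousOn f s)
    (hg : UniformContinuousOn g s) : UniformContinuousOn (fun x => f x + g x) s := by
  rw [Metric.uniformContinuousOn_iff_le] at *
  intro ε hε
  obtain ⟨δ₁, hδ₁, H₁⟩ := hf (ε / 2) (by positivity)
  obtain ⟨δ₂, hδ₂, H₂⟩ := hg (ε / 2) (by positivity)
  refine ⟨min δ₁ δ₂, by positivity, fun x hx y hy hxy => ?_⟩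
  calc dist (f x + g x) (f y + g y) ≤ dist (f x) (f y) + dist (g x) (g y) := dist_add_add_le _ _ _ _
    _ ≤ ε / 2 + ε / 2 := add_le_add (H₁ x hx y hy (hxy.trans (min_le_left _ _)))
        (H₂ x hx y hy (hxy.trans (min_le_right _ _)))
    _ = ε := by ring

lemma ucOn_mul {f g : X → ℂ} {s : Set X} {Cf Cg : ℝ} (hf : UniformContinuousOn f s)
    (hg : UniformContinuousOn g s) (hCf : ∀ x ∈ s, ‖f x‖ ≤ Cf) (hCg : ∀ x ∈ s, ‖g x‖ ≤ Cg) :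
    UniformContinuousOn (fun x => f x * g x) s := by
  set Df : ℝ := max Cf 0 + 1 with hDf
  set Dg : ℝ := max Cg 0 + 1 with hDg
  have hDf0 : (0:ℝ) < Df := by positivity
  have hDg0 : (0:ℝ) < Dg := by positivity
  have hCf' : ∀ x ∈ s, ‖f x‖ ≤ Df := fun x hx =>
    (hCf x hx).trans (by rw [hDf]; nlinarith [le_max_left Cf (0:ℝ)])
  have hCg' : ∀ x ∈ s, ‖g x‖ ≤ Dg := fun x hx =>
    (hCg x hx).trans (by rw [hDg]; nlinarith [le_max_left Cg (0:ℝ)])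
  rw [Metric.uniformContinuousOn_iff_le] at *
  intro ε hε
  obtain ⟨δ₁, hδ₁, H₁⟩ := hf (ε / (2 * Dg)) (by positivity)
  obtain ⟨δ₂, hδ₂, H₂⟩ := hg (ε / (2 * Df)) (by positivity)
  refine ⟨min δ₁ δ₂, by positivity, fun x hx y hy hxy => ?_⟩
  have key : f x * g x - f y * g y = f x * (g x - g y) + (f x - f y) * g y := by ring
  rw [dist_eq_norm, key]
  have h1 : ‖f x * (g x - g y)‖ ≤ Df * (ε / (2 * Df)) := by
    rw [norm_mul]
    have := H₂ x hx y hy (hxy.trans (min_le_right _ _))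
    rw [dist_eq_norm] at this
    exact mul_le_mul (hCf' x hx) this (norm_nonneg _) hDf0.le
  have h2 : ‖(f x - f y) * g y‖ ≤ (ε / (2 * Dg)) * Dg := by
    rw [norm_mul]
    have := H₁ x hx y hy (hxy.trans (min_le_left _ _))
    rw [dist_eq_norm] at this
    exact mul_le_mul this (hCg' y hy) (norm_nonneg _) (by positivity)
  calc ‖f x * (g x - g y) + (f x - f y) * g y‖
      ≤ ‖f x * (g x - g y)‖ + ‖(f x - f y) * g y‖ := norm_add_le _ _
    _ ≤ Df * (ε / (2 * Df)) + (ε / (2 * Dg)) * Dg := add_le_add h1 h2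
    _ = ε / 2 + ε / 2 := by
        have e1 : Df * (ε / (2 * Df)) = ε / 2 := by field_simp
        have e2 : ε / (2 * Dg) * Dg = ε / 2 := by field_simp
        rw [e1, e2]
    _ = ε := by ring

lemma memAu_analyticOnNhd {f : X → ℂ} (hf : MemAu X f) :
    AnalyticOnNhd ℂ f (ball (0 : X) 1) := (isOpen_ball.analyticOn_iff_analyticOnNhd).mp hf.1

lemma memAu_of (h1 : AnalyticOnNhd ℂ f (ball (0 : X) 1))
    (h2 : ∃ C : ℝ, ∀ x ∈ ball (0 : X) 1, ‖f x‖ ≤ C)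
    (h3 : UniformContinuousOn f (ball (0 : X) 1)) : MemAu X f :=
  ⟨(isOpen_ball.analyticOn_iff_analyticOnNhd).mpr h1, h2, h3⟩

lemma memAu_add {f g : X → ℂ} (hf : MemAu X f) (hg : MemAu X g) : MemAu X (f + g) := by
  obtain ⟨Cf, hCf⟩ := hf.2.1
  obtain ⟨Cg, hCg⟩ := hg.2.1
  refine memAu_of ((memAu_analyticOnNhd hf).add (memAu_analyticOnNhd hg))
    ⟨Cf + Cg, fun x hx => ?_⟩ (ucOn_add hf.2.2 hg.2.2)
  exact (norm_add_le _ _).trans (add_le_add (hCf x hx) (hCg x hx))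

lemma memAu_mul {f g : X → ℂ} (hf : MemAu X f) (hg : MemAu X g) : MemAu X (f * g) := by
  obtain ⟨Cf, hCf⟩ := hf.2.1
  obtain ⟨Cg, hCg⟩ := hg.2.1
  refine memAu_of ((memAu_analyticOnNhd hf).mul (memAu_analyticOnNhd hg))
    ⟨Cf * Cg, fun x hx => ?_⟩ (ucOn_mul hf.2.2 hg.2.2 hCf hCg)
  simp only [Pi.mul_apply, norm_mul]
  exact mul_le_mul (hCf x hx) (hCg x hx) (norm_nonneg _)
    ((norm_nonneg _).trans (hCf x hx))

lemma memAu_const (c : ℂ) : MemAu X (fun _ : X => c) := by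
  refine memAu_of analyticOnNhd_const ⟨‖c‖, fun x _ => le_rfl⟩ ?_
  exact ucOn_of_uc uniformContinuous_const _

lemma memAu_one : MemAu X (1 : X → ℂ) := memAu_const 1

lemma memAu_smul {f : X → ℂ} (hf : MemAu X f) (c : ℂ) : MemAu X (c • f) := by
  have : c • f = (fun _ : X => c) * f := by funext x; simp [smul_eq_mul]
  rw [this]
  exact memAu_mul (memAu_const c) hf

lemma memAu_neg {f : X → ℂ} (hf : MemAu X f) : MemAu X (-f) := by
  have : -f = ((-1 : ℂ)) • f := by funext x; simp
  rw [this]; exact memAu_smul hf _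

lemma memAu_sub {f g : X → ℂ} (hf : MemAu X f) (hg : MemAu X g) : MemAu X (f - g) := by
  have : f - g = f + -g := by funext x; simp [sub_eq_add_neg]
  rw [this]; exact memAu_add hf (memAu_neg hg)

lemma memAu_sum {ι : Type*} (s : Finset ι) (g : ι → X → ℂ) (h : ∀ i ∈ s, MemAu X (g i)) :
    MemAu X (∑ i ∈ s, g i) := by
  classical
  induction s using Finset.induction_on with
  | empty => rw [Finset.sum_empty]; exact memAu_const 0
  | insert _ _ hni ih =>
    rename_i a s
    rw [Finset.sum_insert hni]
    exact memAu_add (h a (Finset.mem_insert_self a s))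
      (ih fun i hi => h i (Finset.mem_insert_of_mem hi))

lemma memAu_clm (φ : X →L[ℂ] ℂ) : MemAu X (⇑φ) := by
  refine memAu_of (φ.analyticOnNhd _) ⟨‖φ‖, fun x hx => ?_⟩ ?_
  · calc ‖φ x‖ ≤ ‖φ‖ * ‖x‖ := φ.le_opNorm x
      _ ≤ ‖φ‖ * 1 := by
          have : ‖x‖ ≤ 1 := by simpa [dist_eq_norm] using (mem_ball.mp hx).le
          exact mul_le_mul_of_nonneg_left this (norm_nonneg _)
      _ = ‖φ‖ := mul_one _
  · exact ucOn_of_uc φ.uniformContinuous _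

lemma memAu_comp_clm {f : X → ℂ} (hf : MemAu X f) (A : X →L[ℂ] X)
    (hA : ∀ x, ‖A x‖ ≤ ‖x‖) : MemAu X (fun x => f (A x)) := by
  obtain ⟨Cf, hCf⟩ := hf.2.1
  have hmaps : Set.MapsTo (⇑A) (ball (0 : X) 1) (ball (0 : X) 1) := by
    intro x hx
    simp only [mem_ball, dist_zero_right] at *
    exact (hA x).trans_lt hx
  refine memAu_of ?_ ⟨Cf, fun x hx => hCf _ (hmaps hx)⟩ ?_
  · exact (memAu_analyticOnNhd hf).comp (A.analyticOnNhd _) hmaps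
  · have hucf := hf.2.2
    rw [Metric.uniformContinuousOn_iff] at hucf ⊢
    intro ε hε
    obtain ⟨δ, hδ, H⟩ := hucf ε hε
    refine ⟨δ, hδ, fun x hx y hy hxy => ?_⟩
    refine H (A x) (hmaps hx) (A y) (hmaps hy) ?_
    have : ‖A x - A y‖ ≤ ‖x - y‖ := by
      calc ‖A x - A y‖ = ‖A (x - y)‖ := by rw [map_sub]
        _ ≤ ‖x - y‖ := hA _
    rw [dist_eq_norm] at *
    exact this.trans_lt hxy


section Cauchy

variable {F : Type*} [NormedAddCommGroup F] [NormedSpace ℂ F]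

lemma cauchy_deriv_bound {g : X → F} {s s' M : ℝ} (hss : s' < s)
    (hg : DifferentiableOn ℂ g (ball (0:X) s))
    (hM : ∀ y ∈ ball (0:X) s, ‖g y‖ ≤ M)
    {y : X} (hy : y ∈ ball (0:X) s') (e : X) :
    ‖fderiv ℂ g y e‖ ≤ (2 * M + 1) / (s - s') * ‖e‖ := by
  have hy0 : ‖y‖ < s' := by simpa [dist_eq_norm] using hy
  have hys : y ∈ ball (0:X) s := by
    simp only [mem_ball, dist_zero_right]; linarith
  have hM0 : 0 ≤ M := (norm_nonneg _).trans (hM y hys)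
  have hssp : 0 < s - s' := by linarith
  rcases eq_or_ne e 0 with rfl | he
  · simp only [map_zero, norm_zero]; positivity
  have he0 : 0 < ‖e‖ := norm_pos_iff.mpr he
  set R₁ : ℝ := (s - s') / ‖e‖ with hR₁
  have hR₁0 : 0 < R₁ := by positivity
  set u : ℂ → F := fun z => g (y + z • e) with hu
  have hmem : ∀ z ∈ ball (0:ℂ) R₁, y + z • e ∈ ball (0:X) s := by
    intro z hz
    rw [mem_ball, dist_zero_right] at hz ⊢
    calc ‖y + z • e‖ ≤ ‖y‖ + ‖z‖ * ‖e‖ := by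
          refine (norm_add_le _ _).trans ?_; rw [norm_smul]
      _ < s' + R₁ * ‖e‖ := add_lt_add hy0 (mul_lt_mul_of_pos_right hz he0)

      _ = s := by rw [hR₁]; field_simp; ring
  have haff : Differentiable ℂ (fun z : ℂ => y + z • e) :=
    (differentiable_id.smul_const e).const_add y
  have hdu : DifferentiableOn ℂ u (ball (0:ℂ) R₁) := by
    intro z hz
    exact ((hg (y + z • e) (hmem z hz)).comp z
      (haff z).differentiableWithinAt (fun w hw => hmem w hw)).mono (by intro w hw; exact hw)
  have hm : HasDerivAt (fun z : ℂ => y + z • e) e 0 := by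
    simpa using ((hasDerivAt_id (0:ℂ)).smul_const e).const_add y
  have hgy : HasFDerivAt g (fderiv ℂ g y) y :=
    (hg.differentiableAt (isOpen_ball.mem_nhds hys)).hasFDerivAt
  have hgy' : HasFDerivAt g (fderiv ℂ g y) ((fun z : ℂ => y + z • e) 0) := by
    simpa using hgy
  have hud : HasDerivAt u (fderiv ℂ g y e) 0 := hgy'.comp_hasDerivAt 0 hm
  have hmaps : Set.MapsTo u (ball (0:ℂ) R₁) (ball (u 0) (2 * M + 1)) := by
    intro z hz
    have h1 : ‖u z‖ ≤ M := hM _ (hmem z hz)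
    have h2 : ‖u 0‖ ≤ M := by
      refine hM _ ?_
      simpa using hmem 0 (by simpa [dist_eq_norm] using hR₁0)
    simp only [mem_ball, dist_eq_norm]
    calc ‖u z - u 0‖ ≤ ‖u z‖ + ‖u 0‖ := norm_sub_le _ _
      _ ≤ M + M := add_le_add h1 h2
      _ < 2 * M + 1 := by linarith
  have key := Complex.norm_deriv_le_div_of_mapsTo_ball hdu (hmaps.mono_right ball_subset_closedBall) hR₁0
  rw [hud.deriv] at key
  refine key.trans (le_of_eq ?_)
  rw [hR₁, div_div_eq_mul_div, div_mul_eq_mul_div, mul_comm (2 * M + 1) ‖e‖, mul_div_assoc,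
    mul_comm]

lemma cauchy_fderiv_bound {g : X → F} {s s' M : ℝ} (hss : s' < s)
    (hg : DifferentiableOn ℂ g (ball (0:X) s))
    (hM : ∀ y ∈ ball (0:X) s, ‖g y‖ ≤ M)
    {y : X} (hy : y ∈ ball (0:X) s') :
    ‖fderiv ℂ g y‖ ≤ (2 * M + 1) / (s - s') := by
  have hys : y ∈ ball (0:X) s := ball_subset_ball hss.le hy
  have hM0 : 0 ≤ M := (norm_nonneg _).trans (hM y hys)
  have hssp : 0 < s - s' := by linarith
  exact ContinuousLinearMap.opNorm_le_bound _ (by positivity)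
    (fun e => cauchy_deriv_bound hss hg hM hy e)

lemma lip_of_bound {g : X → F} {s s' M : ℝ} (hss : s' < s)
    (hg : DifferentiableOn ℂ g (ball (0:X) s))
    (hM : ∀ y ∈ ball (0:X) s, ‖g y‖ ≤ M)
    {a b : X} (ha : a ∈ ball (0:X) s') (hb : b ∈ ball (0:X) s') :
    ‖g a - g b‖ ≤ (2 * M + 1) / (s - s') * ‖a - b‖ := by
  have := Convex.norm_image_sub_le_of_norm_fderiv_le (𝕜 := ℂ) (f := g)
    (s := ball (0:X) s')
    (fun x hx => hg.differentiableAt (isOpen_ball.mem_nhds (ball_subset_ball hss.le hx)))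
    (fun x hx => cauchy_fderiv_bound hss hg hM hx) (convex_ball 0 s') hb ha
  exact this

lemma taylor_remainder {g : X → F} {s' L : ℝ}
    (hd : ∀ x ∈ ball (0:X) s', DifferentiableAt ℂ g x)
    (hlip : ∀ p ∈ ball (0:X) s', ∀ q ∈ ball (0:X) s',
      ‖fderiv ℂ g p - fderiv ℂ g q‖ ≤ L * ‖p - q‖)
    {a b : X} (ha : a ∈ ball (0:X) s') (hb : b ∈ ball (0:X) s') :
    ‖g b - g a - fderiv ℂ g a (b - a)‖ ≤ L * ‖b - a‖ * ‖b - a‖ := by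
  rcases eq_or_ne b a with rfl | hba
  · simp
  have hba0 : 0 < ‖b - a‖ := by
    rw [norm_pos_iff]; exact sub_ne_zero.mpr hba
  have hL0 : 0 ≤ L := by
    have h0 := hlip b hb a ha
    nlinarith [norm_nonneg (fderiv ℂ g b - fderiv ℂ g a)]
  set w : X → F := fun y => g y - fderiv ℂ g a y with hw
  have hseg : segment ℝ a b ⊆ ball (0:X) s' := (convex_ball _ _).segment_subset ha hb
  have hdiffw : ∀ x ∈ segment ℝ a b, DifferentiableAt ℂ w x := fun x hx =>
    (hd x (hseg hx)).sub ((fderiv ℂ g a).differentiableAt)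
  have hbound : ∀ x ∈ segment ℝ a b, ‖fderiv ℂ w x‖ ≤ L * ‖b - a‖ := by
    intro x hx
    have hfw : fderiv ℂ w x = fderiv ℂ g x - fderiv ℂ g a := by
      rw [hw]
      rw [fderiv_fun_sub (hd x (hseg hx)) ((fderiv ℂ g a).differentiableAt)]
      rw [ContinuousLinearMap.fderiv]
    rw [hfw]
    obtain ⟨t, ht, rfl⟩ := by
      rw [segment_eq_image'] at hx; exact hx
    have hxa : ‖a + t • (b - a) - a‖ ≤ ‖b - a‖ := by
      rw [add_sub_cancel_left, norm_smul, Real.norm_eq_abs, abs_of_nonneg ht.1]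
      have : ‖b - a‖ = 1 * ‖b - a‖ := (one_mul _).symm
      nlinarith [norm_nonneg (b - a), ht.2]
    refine (hlip _ (hseg (by rw [segment_eq_image']; exact ⟨t, ht, rfl⟩)) a
      (left_mem_segment ℝ a b |> hseg)).trans ?_
    exact mul_le_mul_of_nonneg_left hxa hL0
  have key := Convex.norm_image_sub_le_of_norm_fderiv_le (𝕜 := ℂ) (f := w)
    (s := segment ℝ a b) hdiffw hbound (convex_segment a b)
    (left_mem_segment ℝ a b) (right_mem_segment ℝ a b)
  have hwba : w b - w a = g b - g a - fderiv ℂ g a (b - a) := by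
    simp only [hw]
    rw [map_sub]
    abel
  rw [hwba] at key
  calc ‖g b - g a - fderiv ℂ g a (b - a)‖ ≤ L * ‖b - a‖ * ‖b - a‖ := key

end Cauchy


section Char

variable (τ : Character X (MemAu X))

lemma char_bound : ∃ C : ℝ, 0 ≤ C ∧ ∀ (g : X → ℂ) (M : ℝ), MemAu X g →
    (∀ x ∈ ball (0 : X) 1, ‖g x‖ ≤ M) → ‖τ.toFun g‖ ≤ C * M := by
  obtain ⟨C, hC⟩ := τ.continuous'
  refine ⟨max C 0, le_max_right _ _, fun g M hg hM => ?_⟩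
  have hM0 : 0 ≤ M := (norm_nonneg (g 0)).trans (hM 0 (by simp))
  exact (hC g M hg hM).trans (mul_le_mul_of_nonneg_right (le_max_left _ _) hM0)

lemma char_sub (f g : X → ℂ) (hf : MemAu X f) (hg : MemAu X g) :
    τ.toFun (f - g) = τ.toFun f - τ.toFun g := by
  have h1 : f - g = f + (-1 : ℂ) • g := by funext x; simp [sub_eq_add_neg]
  rw [h1, τ.map_add' f ((-1:ℂ) • g) hf (memAu_smul hg (-1)), τ.map_smul' _ _ hg]
  ring

lemma char_sum {ι : Type*} (s : Finset ι) (g : ι → X → ℂ) (h : ∀ i ∈ s, MemAu X (g i)) :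
    τ.toFun (∑ i ∈ s, g i) = ∑ i ∈ s, τ.toFun (g i) := by
  classical
  induction s using Finset.induction_on with
  | empty =>
    have h0 : (∑ i ∈ (∅ : Finset ι), g i) = ((0:ℂ) • (1 : X → ℂ)) := by funext x; simp
    rw [Finset.sum_empty] at h0 ⊢
    rw [h0, τ.map_smul' 0 1 memAu_one]
    simp
  | insert _ _ hni ih =>
    rename_i a s
    rw [Finset.sum_insert hni, Finset.sum_insert hni,
      τ.map_add' _ _ (h a (Finset.mem_insert_self a s))
        (memAu_sum _ _ fun i hi => h i (Finset.mem_insert_of_mem hi)),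
      ih (fun i hi => h i (Finset.mem_insert_of_mem hi))]

lemma char_const (c : ℂ) : τ.toFun (fun _ => c) = c := by
  have h : (fun _ : X => c) = c • (1 : X → ℂ) := by funext x; simp
  rw [h, τ.map_smul' c 1 memAu_one, τ.map_one']
  ring

lemma char_mem_closure (g : X → ℂ) (hg : MemAu X g) {ε : ℝ} (hε : 0 < ε) :
    ∃ x ∈ ball (0:X) 1, ‖g x - τ.toFun g‖ < ε := by
  by_contra hcon
  push_neg at hcon
  set w := τ.toFun g with hwdef
  set gw : X → ℂ := fun x => g x - w with hgwdef
  have hgw : MemAu X gw := memAu_sub hg (memAu_const w)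
  have hlow : ∀ x ∈ ball (0:X) 1, ε ≤ ‖gw x‖ := fun x hx => hcon x hx
  have hne : ∀ x ∈ ball (0:X) 1, gw x ≠ 0 := by
    intro x hx h0
    have h1 := hlow x hx
    rw [h0, norm_zero] at h1
    linarith
  set u : X → ℂ := fun x => (gw x)⁻¹ with hudef
  have hu : MemAu X u := by
    refine memAu_of ?_ ⟨ε⁻¹, fun x hx => ?_⟩ ?_
    · intro x hx
      exact ((memAu_analyticOnNhd hgw) x hx).inv (hne x hx)
    · rw [hudef]
      simp only [norm_inv]
      exact inv_anti₀ hε (hlow x hx)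
    · have hucg := hgw.2.2
      rw [Metric.uniformContinuousOn_iff] at hucg ⊢
      intro η hη
      obtain ⟨δ, hδ, H⟩ := hucg (η * ε * ε) (by positivity)
      refine ⟨δ, hδ, fun x hx y hy hxy => ?_⟩
      have hdi : dist (u x) (u y) = dist (gw x) (gw y) / (‖gw x‖ * ‖gw y‖) :=
        dist_inv_inv₀ (hne x hx) (hne y hy)
      rw [hdi]
      have hεε : (0:ℝ) < ε * ε := by positivity
      have h1 : dist (gw x) (gw y) / (‖gw x‖ * ‖gw y‖) ≤ dist (gw x) (gw y) / (ε * ε) := by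
        apply div_le_div_of_nonneg_left dist_nonneg hεε
        exact mul_le_mul (hlow x hx) (hlow y hy) hε.le (norm_nonneg _)
      refine h1.trans_lt ?_
      rw [div_lt_iff₀ hεε]
      have h2 := H x hx y hy hxy
      calc dist (gw x) (gw y) < η * ε * ε := h2
        _ = η * (ε * ε) := by ring
  have hone : τ.toFun (gw * u) = 1 := by
    have := τ.congr' (gw * u) 1 (memAu_mul hgw hu) memAu_one (fun x hx => by
      show gw x * u x = 1
      show gw x * (gw x)⁻¹ = 1
      exact mul_inv_cancel₀ (hne x hx))
    rw [this, τ.map_one']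
  have hzero : τ.toFun gw = 0 := by
    have h1 : τ.toFun gw = τ.toFun g - τ.toFun (fun _ => w) := by
      have : gw = g - (fun _ => w) := by funext x; simp [hgwdef]
      rw [this]
      exact char_sub τ g (fun _ => w) hg (memAu_const w)
    rw [h1, char_const]
    exact sub_self _
  rw [τ.map_mul' gw u hgw hu, hzero, zero_mul] at hone
  exact one_ne_zero hone.symm

end Char

section Main

set_option maxHeartbeats 2000000 in
lemma char_comp_scaled (τ : Character X (MemAu X)) (hτ0 : τ.inFiberZero)
    (T : X →L[ℂ] X) (hT1 : ∀ x, ‖T x‖ ≤ ‖x‖)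
    {d : ℕ} (b : Fin d → X) (ψ : Fin d → (X →L[ℂ] ℂ))
    (hdecomp : ∀ x : X, x - T x = ∑ j, ψ j x • b j)
    {f : X → ℂ} (hf : MemAu X f) {C : ℝ} (hC : ∀ x ∈ ball (0:X) 1, ‖f x‖ ≤ C)
    {r : ℝ} (hr0 : 0 < r) (hr1 : r < 1) :
    τ.toFun (fun x => f ((r:ℂ) • x)) = τ.toFun (fun x => f ((r:ℂ) • T x)) := by
  obtain ⟨Cτ, hCτ0, hCτ⟩ := char_bound τ
  have hC0 : 0 ≤ C := (norm_nonneg _).trans (hC 0 (by simp))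
  set r0 : ℝ := (2*r+1)/3 with hr0def
  set r1 : ℝ := (r+2)/3 with hr1def
  have hrr0 : r < r0 := by rw [hr0def]; linarith
  have hr01 : r0 < r1 := by rw [hr0def, hr1def]; linarith
  have hr11 : r1 < 1 := by rw [hr1def]; linarith
  have hr0pos : 0 < r0 := by rw [hr0def]; linarith
  have hfa : AnalyticOnNhd ℂ f (ball (0:X) 1) := memAu_analyticOnNhd hf
  have hfd : DifferentiableOn ℂ f (ball (0:X) 1) := hfa.differentiableOn
  have hDfa : AnalyticOnNhd ℂ (fderiv ℂ f) (ball (0:X) 1) := hfa.fderiv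
  have hDfd : DifferentiableOn ℂ (fderiv ℂ f) (ball (0:X) 1) := hDfa.differentiableOn
  set M₁ : ℝ := (2*C+1)/(1-r1) with hM₁def
  have h1r1 : 0 < 1 - r1 := by rw [hr1def]; linarith
  have hM₁pos : 0 < M₁ := by rw [hM₁def]; exact div_pos (by linarith) (by rw [hr1def]; linarith)
  have hM₁ : ∀ y ∈ ball (0:X) r1, ‖fderiv ℂ f y‖ ≤ M₁ := fun y hy =>
    cauchy_fderiv_bound hr11 hfd hC hy
  set L : ℝ := (2*M₁+1)/(r1-r0) with hLdef
  have hL0 : 0 < L := by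
    rw [hLdef]
    exact div_pos (by linarith) (by rw [hr0def, hr1def]; linarith)
  have hL : ∀ p ∈ ball (0:X) r0, ∀ q ∈ ball (0:X) r0,
      ‖fderiv ℂ f p - fderiv ℂ f q‖ ≤ L * ‖p - q‖ := by
    intro p hp q hq
    exact lip_of_bound hr01 (hDfd.mono (ball_subset_ball hr11.le)) hM₁ hp hq
  set A : ℝ → (X →L[ℂ] X) := fun θ =>
    ((r*(1-θ) : ℝ) : ℂ) • T + ((r*θ : ℝ) : ℂ) • ContinuousLinearMap.id ℂ X with hA
  have hAapp : ∀ θ : ℝ, ∀ x : X,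
      A θ x = ((r*(1-θ) : ℝ) : ℂ) • T x + ((r*θ : ℝ) : ℂ) • x := by
    intro θ x
    simp [hA]
  have hAnorm : ∀ θ ∈ Set.Icc (0:ℝ) 1, ∀ x : X, ‖A θ x‖ ≤ r * ‖x‖ := by
    intro θ hθ x
    rw [hAapp]
    calc ‖((r*(1-θ) : ℝ) : ℂ) • T x + ((r*θ : ℝ) : ℂ) • x‖
        ≤ ‖((r*(1-θ) : ℝ) : ℂ) • T x‖ + ‖((r*θ : ℝ) : ℂ) • x‖ := norm_add_le _ _
      _ = (r*(1-θ)) * ‖T x‖ + (r*θ) * ‖x‖ := by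
          rw [norm_smul, norm_smul, Complex.norm_real, Complex.norm_real,
            Real.norm_eq_abs, Real.norm_eq_abs,
            abs_of_nonneg (mul_nonneg hr0.le (by linarith [hθ.2] : (0:ℝ) ≤ 1-θ)),
            abs_of_nonneg (mul_nonneg hr0.le hθ.1)]
      _ ≤ (r*(1-θ)) * ‖x‖ + (r*θ) * ‖x‖ := by
          have h1 : (r*(1-θ)) * ‖T x‖ ≤ (r*(1-θ)) * ‖x‖ :=
            mul_le_mul_of_nonneg_left (hT1 x)
              (mul_nonneg hr0.le (by linarith [hθ.2] : (0:ℝ) ≤ 1-θ))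
          linarith
      _ = r * ‖x‖ := by ring
  have hAone : ∀ x, ‖A 1 x‖ ≤ ‖x‖ := fun x =>
    (hAnorm 1 (by norm_num) x).trans (mul_le_of_le_one_left (norm_nonneg x) hr1.le)
  have hAdiff : ∀ (θ θ' : ℝ) (x : X),
      A θ' x - A θ x = ((r*(θ'-θ) : ℝ) : ℂ) • (x - T x) := by
    intro θ θ' x
    rw [hAapp, hAapp]
    push_cast
    module
  have hAball : ∀ θ ∈ Set.Icc (0:ℝ) 1, ∀ x ∈ ball (0:X) 1, A θ x ∈ ball (0:X) r0 := by
    intro θ hθ x hx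
    rw [mem_ball, dist_zero_right] at hx ⊢
    calc ‖A θ x‖ ≤ r * ‖x‖ := hAnorm θ hθ x
      _ ≤ r * 1 := mul_le_mul_of_nonneg_left hx.le hr0.le
      _ < r0 := by linarith
  have hmemA : ∀ θ ∈ Set.Icc (0:ℝ) 1, MemAu X (fun x => f (A θ x)) := by
    intro θ hθ
    exact memAu_comp_clm hf (A θ)
      (fun x => (hAnorm θ hθ x).trans (mul_le_of_le_one_left (norm_nonneg x) hr1.le))
  -- the key estimate, for every positive m
  have key : ∀ m : ℕ, 0 < m →
      ‖τ.toFun (fun x => f (A 1 x)) - τ.toFun (fun x => f (A 0 x))‖ ≤ Cτ * (4*L/m) := by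
    intro m hm
    have hmR : (0:ℝ) < m := by exact_mod_cast hm
    have hθi : ∀ i : ℕ, i ≤ m → (i:ℝ)/m ∈ Set.Icc (0:ℝ) 1 := by
      intro i hi
      constructor
      · positivity
      · rw [div_le_one hmR]; exact_mod_cast hi
    set h : ℕ → Fin d → X → ℂ := fun i j x => fderiv ℂ f (A ((i:ℝ)/m) x) (b j) with hh
    have hmemh : ∀ i : ℕ, i ≤ m → ∀ j : Fin d, MemAu X (h i j) := by
      intro i hi j
      have hθ := hθi i hi
      refine memAu_of ?_ ⟨M₁ * ‖b j‖, fun x hx => ?_⟩ ?_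
      · intro x hx
        have h1 : AnalyticAt ℂ (A ((i:ℝ)/m)) x := (A ((i:ℝ)/m)).analyticAt x
        have h2 : AnalyticAt ℂ (fderiv ℂ f) (A ((i:ℝ)/m) x) :=
          hDfa _ (ball_subset_ball (by rw [hr0def]; linarith : r0 ≤ 1) (hAball _ hθ x hx))
        have h3 : AnalyticAt ℂ (fun l : X →L[ℂ] ℂ => l (b j)) (fderiv ℂ f (A ((i:ℝ)/m) x)) :=
          (ContinuousLinearMap.apply ℂ ℂ (b j)).analyticAt _
        have h4 : AnalyticAt ℂ (fun y => fderiv ℂ f (A ((i:ℝ)/m) y)) x := h2.comp h1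
        exact AnalyticAt.comp (f := fun y => fderiv ℂ f (A ((i:ℝ)/m) y)) h3 h4
      · have hmem : A ((i:ℝ)/m) x ∈ ball (0:X) r1 :=
          ball_subset_ball hr01.le (hAball _ hθ x hx)
        calc ‖fderiv ℂ f (A ((i:ℝ)/m) x) (b j)‖
            ≤ ‖fderiv ℂ f (A ((i:ℝ)/m) x)‖ * ‖b j‖ := ContinuousLinearMap.le_opNorm _ _
          _ ≤ M₁ * ‖b j‖ := mul_le_mul_of_nonneg_right (hM₁ _ hmem) (norm_nonneg _)
      · refine ucOn_of_lip (L := L * ‖b j‖) ?_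
        intro x hx y hy
        rw [dist_eq_norm, dist_eq_norm]
        have hmx := hAball _ hθ x hx
        have hmy := hAball _ hθ y hy
        calc ‖h i j x - h i j y‖
            = ‖(fderiv ℂ f (A ((i:ℝ)/m) x) - fderiv ℂ f (A ((i:ℝ)/m) y)) (b j)‖ := by
              rw [ContinuousLinearMap.sub_apply]
          _ ≤ ‖fderiv ℂ f (A ((i:ℝ)/m) x) - fderiv ℂ f (A ((i:ℝ)/m) y)‖ * ‖b j‖ :=
              ContinuousLinearMap.le_opNorm _ _
          _ ≤ (L * ‖A ((i:ℝ)/m) x - A ((i:ℝ)/m) y‖) * ‖b j‖ :=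
              mul_le_mul_of_nonneg_right (hL _ hmx _ hmy) (norm_nonneg _)
          _ ≤ (L * ‖x - y‖) * ‖b j‖ := by
              have hAxy : ‖A ((i:ℝ)/m) x - A ((i:ℝ)/m) y‖ ≤ ‖x - y‖ := by
                rw [← map_sub]
                exact (hAnorm _ (hθi i hi) _).trans
                  (mul_le_of_le_one_left (norm_nonneg (x - y)) hr1.le)
              exact mul_le_mul_of_nonneg_right
                (mul_le_mul_of_nonneg_left hAxy hL0.le) (norm_nonneg _)
          _ = L * ‖b j‖ * ‖x - y‖ := by ring
    set c0 : ℂ := ((r*(1/m) : ℝ) : ℂ) with hc0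
    set Dfun : X → ℂ := ∑ i ∈ Finset.range m, ∑ j : Fin d, c0 • (⇑(ψ j) * h i j) with hD
    have hmemD : MemAu X Dfun := by
      refine memAu_sum _ _ (fun i hi => memAu_sum _ _ (fun j _ => ?_))
      exact memAu_smul (memAu_mul (memAu_clm (ψ j)) (hmemh i (Finset.mem_range.mp hi).le j)) c0
    have hτD : τ.toFun Dfun = 0 := by
      rw [hD, char_sum τ _ _ (fun i hi => memAu_sum _ _
        (fun j _ => memAu_smul (memAu_mul (memAu_clm (ψ j))
          (hmemh i (Finset.mem_range.mp hi).le j)) c0))]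
      refine Finset.sum_eq_zero (fun i hi => ?_)
      rw [char_sum τ _ _ (fun j _ => memAu_smul (memAu_mul (memAu_clm (ψ j))
        (hmemh i (Finset.mem_range.mp hi).le j)) c0)]
      refine Finset.sum_eq_zero (fun j _ => ?_)
      rw [τ.map_smul' c0 _ (memAu_mul (memAu_clm (ψ j)) (hmemh i (Finset.mem_range.mp hi).le j)),
        τ.map_mul' _ _ (memAu_clm (ψ j)) (hmemh i (Finset.mem_range.mp hi).le j),
        hτ0 (ψ j)]
      ring
    set Φ : X → ℂ := ((fun x => f (A 1 x)) - (fun x => f (A 0 x))) - Dfun with hΦ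
    have hmemΦ : MemAu X Φ :=
      memAu_sub (memAu_sub (hmemA 1 (by norm_num)) (hmemA 0 (by norm_num))) hmemD
    have hΦbound : ∀ x ∈ ball (0:X) 1, ‖Φ x‖ ≤ 4*L/m := by
      intro x hx
      have htele : f (A 1 x) - f (A 0 x) =
          ∑ i ∈ Finset.range m, (f (A (((i+1 : ℕ) : ℝ)/m) x) - f (A ((i:ℝ)/m) x)) := by
        calc f (A 1 x) - f (A 0 x)
            = f (A ((m:ℝ)/m) x) - f (A (((0:ℕ):ℝ)/m) x) := by
              rw [div_self hmR.ne']
              norm_num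
          _ = ∑ i ∈ Finset.range m, (f (A (((i+1 : ℕ) : ℝ)/m) x) - f (A ((i:ℝ)/m) x)) :=
              (Finset.sum_range_sub (f := fun i : ℕ => f (A ((i:ℝ)/m) x)) m).symm
      have hDx : Dfun x = ∑ i ∈ Finset.range m,
          fderiv ℂ f (A ((i:ℝ)/m) x) (A (((i+1 : ℕ) : ℝ)/m) x - A ((i:ℝ)/m) x) := by
        rw [hD]
        rw [Finset.sum_apply]
        refine Finset.sum_congr rfl (fun i hi => ?_)
        rw [Finset.sum_apply]
        have hd1 : A (((i+1 : ℕ) : ℝ)/m) x - A ((i:ℝ)/m) x = c0 • (x - T x) := by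
          have hfrac : ((i+1 : ℕ) : ℝ)/m - (i:ℝ)/m = 1/m := by push_cast; field_simp; ring
          rw [hAdiff, hfrac]
        rw [hd1, map_smul, hdecomp, map_sum]
        rw [smul_eq_mul, Finset.mul_sum]
        refine Finset.sum_congr rfl (fun j _ => ?_)
        simp only [Pi.smul_apply, Pi.mul_apply, map_smul, smul_eq_mul, hh]
      have hΦx : Φ x = ∑ i ∈ Finset.range m,
          ((f (A (((i+1 : ℕ) : ℝ)/m) x) - f (A ((i:ℝ)/m) x)) -
            fderiv ℂ f (A ((i:ℝ)/m) x) (A (((i+1 : ℕ) : ℝ)/m) x - A ((i:ℝ)/m) x)) := by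
        simp only [hΦ, Pi.sub_apply]
        rw [htele, hDx, ← Finset.sum_sub_distrib]
      rw [hΦx]
      have hterm : ∀ i ∈ Finset.range m,
          ‖(f (A (((i+1 : ℕ) : ℝ)/m) x) - f (A ((i:ℝ)/m) x)) -
            fderiv ℂ f (A ((i:ℝ)/m) x) (A (((i+1 : ℕ) : ℝ)/m) x - A ((i:ℝ)/m) x)‖
            ≤ L * (2/m) * (2/m) := by
        intro i hi
        have him : i ≤ m := (Finset.mem_range.mp hi).le
        have him1 : i + 1 ≤ m := Finset.mem_range.mp hi
        have ha : A ((i:ℝ)/m) x ∈ ball (0:X) r0 := hAball _ (hθi i him) x hx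
        have hb' : A (((i+1 : ℕ) : ℝ)/m) x ∈ ball (0:X) r0 :=
          hAball (((i+1 : ℕ) : ℝ)/m) (hθi (i+1) him1) x hx
        have hrem := taylor_remainder (s' := r0)
          (fun y hy => hfd.differentiableAt
            (isOpen_ball.mem_nhds (ball_subset_ball (by linarith : r0 ≤ 1) hy)))
          hL ha hb'
        refine hrem.trans ?_
        have hdn : ‖A (((i+1 : ℕ) : ℝ)/m) x - A ((i:ℝ)/m) x‖ ≤ 2/m := by
          rw [hAdiff]
          rw [norm_smul, Complex.norm_real, Real.norm_eq_abs]
          have he1 : ((i+1 : ℕ) : ℝ)/m - (i:ℝ)/m = 1/m := by push_cast; field_simp; ring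
          rw [he1]
          have hxT : ‖x - T x‖ ≤ 2 := by
            calc ‖x - T x‖ ≤ ‖x‖ + ‖T x‖ := norm_sub_le _ _
              _ ≤ ‖x‖ + ‖x‖ := by linarith [hT1 x]
              _ ≤ 2 := by
                  rw [mem_ball, dist_zero_right] at hx
                  linarith
          have habs : |r * (1/m)| = r * (1/m) := abs_of_nonneg (by positivity)
          rw [habs]
          calc r * (1/m) * ‖x - T x‖ ≤ 1 * (1/m) * 2 := by
                apply mul_le_mul
                · apply mul_le_mul hr1.le le_rfl (by positivity) (by norm_num)
                · exact hxT
                · exact norm_nonneg _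
                · positivity
            _ = 2/m := by ring
        have h1 : L * ‖A (((i+1 : ℕ) : ℝ)/m) x - A ((i:ℝ)/m) x‖ ≤ L * (2/m) :=
          mul_le_mul_of_nonneg_left hdn hL0.le
        exact mul_le_mul h1 hdn (norm_nonneg _) (mul_nonneg hL0.le (by positivity))
      calc ‖∑ i ∈ Finset.range m, ((f (A (((i+1 : ℕ) : ℝ)/m) x) - f (A ((i:ℝ)/m) x)) -
            fderiv ℂ f (A ((i:ℝ)/m) x) (A (((i+1 : ℕ) : ℝ)/m) x - A ((i:ℝ)/m) x))‖
          ≤ ∑ i ∈ Finset.range m, ‖(f (A (((i+1 : ℕ) : ℝ)/m) x) - f (A ((i:ℝ)/m) x)) -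
            fderiv ℂ f (A ((i:ℝ)/m) x) (A (((i+1 : ℕ) : ℝ)/m) x - A ((i:ℝ)/m) x)‖ :=
            norm_sum_le _ _
        _ ≤ ∑ _i ∈ Finset.range m, L * (2/m) * (2/m) := Finset.sum_le_sum hterm
        _ = m * (L * (2/m) * (2/m)) := by rw [Finset.sum_const, Finset.card_range]; ring
        _ = 4*L/m := by field_simp; ring
    have hτΦ : τ.toFun Φ = τ.toFun (fun x => f (A 1 x)) - τ.toFun (fun x => f (A 0 x)) := by
      rw [hΦ, char_sub τ _ _ (memAu_sub (hmemA 1 (by norm_num)) (hmemA 0 (by norm_num))) hmemD,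
        char_sub τ _ _ (hmemA 1 (by norm_num)) (hmemA 0 (by norm_num)), hτD]
      ring
    rw [← hτΦ]
    exact hCτ Φ (4*L/m) hmemΦ hΦbound
  -- pass to the limit m → ∞
  have hlim : Filter.Tendsto (fun m : ℕ => Cτ * (4*L/m)) atTop (𝓝 0) := by
    have h1 : Filter.Tendsto (fun m : ℕ => (m:ℝ)) atTop atTop := tendsto_natCast_atTop_atTop
    have h2 : Filter.Tendsto (fun m : ℕ => (Cτ * (4*L)) / (m:ℝ)) atTop (𝓝 0) :=
      Filter.Tendsto.div_atTop tendsto_const_nhds h1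
    refine h2.congr' ?_
    filter_upwards [Filter.eventually_gt_atTop 0] with m hm
    field_simp
  have heq : τ.toFun (fun x => f (A 1 x)) = τ.toFun (fun x => f (A 0 x)) := by
    have hle : ‖τ.toFun (fun x => f (A 1 x)) - τ.toFun (fun x => f (A 0 x))‖ ≤ 0 := by
      refine ge_of_tendsto hlim ?_
      filter_upwards [Filter.eventually_gt_atTop 0] with m hm
      exact key m hm
    have := norm_nonneg (τ.toFun (fun x => f (A 1 x)) - τ.toFun (fun x => f (A 0 x)))
    have h0 : ‖τ.toFun (fun x => f (A 1 x)) - τ.toFun (fun x => f (A 0 x))‖ = 0 := le_antisymm hle this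
    rwa [norm_eq_zero, sub_eq_zero] at h0
  have e1 : (fun x => f (A 1 x)) = fun x => f ((r:ℂ) • x) := by
    funext x
    congr 1
    rw [hAapp]
    norm_num
  have e0 : (fun x => f (A 0 x)) = fun x => f ((r:ℂ) • T x) := by
    funext x
    congr 1
    rw [hAapp]
    norm_num
  rw [← e1, ← e0, heq]

lemma char_comp_T (τ : Character X (MemAu X)) (hτ0 : τ.inFiberZero)
    (T : X →L[ℂ] X) (hT1 : ∀ x, ‖T x‖ ≤ ‖x‖)
    {d : ℕ} (b : Fin d → X) (ψ : Fin d → (X →L[ℂ] ℂ))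
    (hdecomp : ∀ x : X, x - T x = ∑ j, ψ j x • b j)
    {f : X → ℂ} (hf : MemAu X f) :
    τ.toFun (fun x => f (T x)) = τ.toFun f := by
  obtain ⟨Cτ, hCτ0, hCτ⟩ := char_bound τ
  obtain ⟨C, hC⟩ := hf.2.1
  suffices H : ∀ η > (0:ℝ), ‖τ.toFun (fun x => f (T x)) - τ.toFun f‖ ≤ η by
    by_contra hne
    have hpos : 0 < ‖τ.toFun (fun x => f (T x)) - τ.toFun f‖ := by
      rw [norm_pos_iff, sub_ne_zero]
      exact hne
    have := H (‖τ.toFun (fun x => f (T x)) - τ.toFun f‖ / 2) (by linarith)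
    linarith
  intro η hη
  have hucf := hf.2.2
  rw [Metric.uniformContinuousOn_iff] at hucf
  set η1 : ℝ := η / (2*(Cτ+1)) with hη1
  have hη1pos : 0 < η1 := by rw [hη1]; exact div_pos hη (by linarith)
  obtain ⟨δ, hδ0, hδ⟩ := hucf η1 hη1pos
  set r : ℝ := 1 - min δ 1 / 2 with hrdef
  have hmin0 : 0 < min δ 1 := lt_min hδ0 one_pos
  have hmin1 : min δ 1 ≤ 1 := min_le_right _ _
  have hminδ : min δ 1 ≤ δ := min_le_left _ _
  have hrpos : 0 < r := by rw [hrdef]; linarith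
  have hr1 : r < 1 := by rw [hrdef]; linarith
  have h1r : 1 - r < δ := by rw [hrdef]; linarith
  have h1rn : 0 ≤ 1 - r := by linarith
  have hmain := char_comp_scaled τ hτ0 T hT1 b ψ hdecomp hf hC hrpos hr1
  have hsmul_mem : ∀ y : X, y ∈ ball (0:X) 1 → (r:ℂ) • y ∈ ball (0:X) 1 := by
    intro y hy
    rw [mem_ball, dist_zero_right] at hy ⊢
    rw [norm_smul, Complex.norm_real, Real.norm_eq_abs, abs_of_nonneg hrpos.le]
    calc r * ‖y‖ ≤ ‖y‖ := mul_le_of_le_one_left (norm_nonneg y) hr1.le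
      _ < 1 := hy
  have hdist : ∀ y : X, y ∈ ball (0:X) 1 → dist y ((r:ℂ) • y) < δ := by
    intro y hy
    rw [mem_ball, dist_zero_right] at hy
    rw [dist_eq_norm]
    have hyr : y - (r:ℂ) • y = ((1-r : ℝ):ℂ) • y := by push_cast; module
    rw [hyr, norm_smul, Complex.norm_real, Real.norm_eq_abs, abs_of_nonneg h1rn]
    calc (1-r) * ‖y‖ ≤ (1-r) * 1 := mul_le_mul_of_nonneg_left hy.le h1rn
      _ = 1 - r := mul_one _
      _ < δ := h1r
  have hb1 : ∀ x ∈ ball (0:X) 1, ‖f ((r:ℂ) • x) - f x‖ ≤ η1 := by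
    intro x hx
    rw [← dist_eq_norm, dist_comm]
    exact (hδ x hx ((r:ℂ) • x) (hsmul_mem x hx) (hdist x hx)).le
  have hTball : ∀ x ∈ ball (0:X) 1, T x ∈ ball (0:X) 1 := by
    intro x hx
    rw [mem_ball, dist_zero_right] at hx ⊢
    exact (hT1 x).trans_lt hx
  have hb2 : ∀ x ∈ ball (0:X) 1, ‖f (T x) - f ((r:ℂ) • T x)‖ ≤ η1 := by
    intro x hx
    rw [← dist_eq_norm]
    exact (hδ (T x) (hTball x hx) ((r:ℂ) • T x) (hsmul_mem _ (hTball x hx))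
      (hdist _ (hTball x hx))).le
  have m1 : MemAu X (fun x => f (T x)) := memAu_comp_clm hf T hT1
  have hrid : ∀ x : X, ‖((r:ℂ) • ContinuousLinearMap.id ℂ X) x‖ ≤ ‖x‖ := by
    intro x
    rw [ContinuousLinearMap.smul_apply, ContinuousLinearMap.id_apply, norm_smul,
      Complex.norm_real, Real.norm_eq_abs, abs_of_nonneg hrpos.le]
    exact mul_le_of_le_one_left (norm_nonneg x) hr1.le
  have hrT : ∀ x : X, ‖((r:ℂ) • T) x‖ ≤ ‖x‖ := by
    intro x
    rw [ContinuousLinearMap.smul_apply, norm_smul,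
      Complex.norm_real, Real.norm_eq_abs, abs_of_nonneg hrpos.le]
    exact (mul_le_of_le_one_left (norm_nonneg _) hr1.le).trans (hT1 x)
  have m2 : MemAu X (fun x => f ((r:ℂ) • x)) :=
    memAu_comp_clm hf ((r:ℂ) • ContinuousLinearMap.id ℂ X) hrid
  have m3 : MemAu X (fun x => f ((r:ℂ) • T x)) :=
    memAu_comp_clm hf ((r:ℂ) • T) hrT
  have e1 : ‖τ.toFun (fun x => f (T x)) - τ.toFun (fun x => f ((r:ℂ) • T x))‖ ≤ Cτ * η1 := by
    rw [← char_sub τ _ _ m1 m3]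
    exact hCτ _ η1 (memAu_sub m1 m3) (fun x hx => hb2 x hx)
  have e2 : ‖τ.toFun (fun x => f ((r:ℂ) • x)) - τ.toFun f‖ ≤ Cτ * η1 := by
    rw [← char_sub τ _ _ m2 hf]
    exact hCτ _ η1 (memAu_sub m2 hf) (fun x hx => hb1 x hx)
  calc ‖τ.toFun (fun x => f (T x)) - τ.toFun f‖
      ≤ ‖τ.toFun (fun x => f (T x)) - τ.toFun (fun x => f ((r:ℂ) • T x))‖ +
        ‖τ.toFun (fun x => f ((r:ℂ) • T x)) - τ.toFun f‖ := norm_sub_le_norm_sub_add_norm_sub _ _ _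
    _ = ‖τ.toFun (fun x => f (T x)) - τ.toFun (fun x => f ((r:ℂ) • T x))‖ +
        ‖τ.toFun (fun x => f ((r:ℂ) • x)) - τ.toFun f‖ := by rw [hmain]
    _ ≤ Cτ * η1 + Cτ * η1 := add_le_add e1 e2
    _ = (Cτ/(Cτ+1)) * η := by rw [hη1]; field_simp; ring
    _ ≤ 1 * η := mul_le_mul_of_nonneg_right (by rw [div_le_one (by linarith)]; linarith) hη.le
    _ = η := one_mul η

lemma exists_coords {E : ℕ → Submodule ℂ X} (hEfin : ∀ n, FiniteDimensional ℂ ↥(E n))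
    (hrep : ∀ x : X, ∃! a : ℕ → X, (∀ n, a n ∈ E n) ∧
      Tendsto (fun N => ∑ n ∈ Finset.range N, a n) atTop (𝓝 x))
    (P : ℕ → X →L[ℂ] X)
    (hP : ∀ (x : X) (a : ℕ → X), (∀ n, a n ∈ E n) →
      Tendsto (fun N => ∑ n ∈ Finset.range N, a n) atTop (𝓝 x) →
      ∀ N, P N x = ∑ n ∈ Finset.range N, a n) (n : ℕ) :
    ∃ (d : ℕ) (b : Fin d → X) (ψ : Fin d → (X →L[ℂ] ℂ)),
      ∀ x : X, P n x = ∑ j, ψ j x • b j := by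
  classical
  letI : ∀ k, FiniteDimensional ℂ ↥(E k) := hEfin
  set F : Submodule ℂ X := (Finset.range n).sup E with hF
  haveI : FiniteDimensional ℂ ↥F := Submodule.finiteDimensional_finset_sup _ _
  have hmem : ∀ x : X, P n x ∈ F := by
    intro x
    obtain ⟨a, ⟨ha1, ha2⟩, -⟩ := hrep x
    rw [hP x a ha1 ha2 n]
    exact Submodule.sum_mem _ (fun k hk => (Finset.le_sup hk : E k ≤ F) (ha1 k))
  set Pc : X →L[ℂ] ↥F := (P n).codRestrict F hmem with hPc
  set bs : Module.Basis (Fin (Module.finrank ℂ ↥F)) ℂ ↥F := Module.finBasis ℂ ↥F with hbs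
  refine ⟨Module.finrank ℂ ↥F, fun j => (bs j : X),
    fun j => (LinearMap.toContinuousLinearMap (bs.coord j)).comp Pc, ?_⟩
  intro x
  have h1 : P n x = ((Pc x : ↥F) : X) := rfl
  rw [h1, ← Module.Basis.sum_repr bs (Pc x)]
  rw [Submodule.coe_sum]
  refine Finset.sum_congr rfl (fun j _ => ?_)
  simp [Module.Basis.coord_apply]

lemma cluster_to_char {f : X → ℂ} (hf : MemAu X f) {z : ℂ}
    (hz : z ∈ clusterSetZero X f) :
    ∃ τ : Character X (MemAu X), τ.inFiberZero ∧ τ.toFun f = z := by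
  obtain ⟨l, hlne, hlB, hlφ, hlf⟩ := hz
  haveI := hlne
  set U : Ultrafilter X := Ultrafilter.of l with hU
  have hUl : (U : Filter X) ≤ l := Ultrafilter.of_le l
  have hUB : (U : Filter X) ≤ 𝓟 (ball (0:X) 1) := hUl.trans hlB
  have hball : ball (0:X) 1 ∈ (U : Filter X) := le_principal_iff.mp hUB
  have htends : ∀ g : X → ℂ, MemAu X g → ∃ w, Tendsto g (U : Filter X) (𝓝 w) := by
    intro g hg
    obtain ⟨C, hC⟩ := hg.2.1
    have hK : IsCompact (Metric.closedBall (0:ℂ) C) := isCompact_closedBall _ _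
    have hmem : Metric.closedBall (0:ℂ) C ∈ U.map g := by
      rw [Ultrafilter.mem_map]
      filter_upwards [hball] with x hx
      simp only [Set.mem_preimage, Metric.mem_closedBall, dist_zero_right]
      exact hC x hx
    obtain ⟨w, _, hw⟩ := hK.ultrafilter_le_nhds' (U.map g) hmem
    exact ⟨w, hw⟩
  have hlim : ∀ g : X → ℂ, MemAu X g →
      Tendsto g (U : Filter X) (𝓝 (limUnder (U : Filter X) g)) :=
    fun g hg => tendsto_nhds_limUnder (htends g hg)
  refine ⟨⟨fun g => limUnder (U : Filter X) g, ?_, ?_, ?_, ?_, ?_, ?_⟩, ?_, ?_⟩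
  · -- congr'
    intro g1 g2 hg1 hg2 heq
    have he : g1 =ᶠ[(U : Filter X)] g2 := by
      filter_upwards [hball] with x hx
      exact heq x hx
    exact (((hlim g1 hg1).congr' he).limUnder_eq).symm
  · -- add
    intro g1 g2 hg1 hg2
    exact ((hlim g1 hg1).add (hlim g2 hg2)).limUnder_eq
  · -- mul
    intro g1 g2 hg1 hg2
    exact ((hlim g1 hg1).mul (hlim g2 hg2)).limUnder_eq
  · -- smul
    intro c g hg
    exact ((hlim g hg).const_mul c).limUnder_eq
  · -- one
    exact (tendsto_const_nhds :
      Tendsto (fun _ : X => (1:ℂ)) (U : Filter X) (𝓝 1)).limUnder_eq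
  · -- continuous
    refine ⟨1, fun g M hg hM => ?_⟩
    rw [one_mul]
    refine le_of_tendsto (hlim g hg).norm ?_
    filter_upwards [hball] with x hx
    exact hM x hx
  · -- fiber zero
    intro φ
    exact ((hlφ φ).mono_left hUl).limUnder_eq
  · exact (hlf.mono_left hUl).limUnder_eq

end Main

end CVAux
end ClusterValue

open Metric Filter Topology ClusterValue in
/-- If `X` has a shrinking reverse monotone finite dimensional decomposition (a shrinking FDD
whose canonical partial sum projections `P n` satisfy `‖I - P n‖ = 1`), then the cluster value
theorem holds for `A_u(B)` at `0`. -/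
theorem statement3 {X : Type*} [NormedAddCommGroup X] [NormedSpace ℂ X]
    (E : ℕ → Submodule ℂ X) (hEfin : ∀ n, FiniteDimensional ℂ ↥(E n))
    -- every `x : X` has a unique representation `x = ∑ n, a n` with `a n ∈ E n`
    (hrep : ∀ x : X, ∃! a : ℕ → X, (∀ n, a n ∈ E n) ∧
      Tendsto (fun N => ∑ n ∈ Finset.range N, a n) atTop (𝓝 x))
    -- the canonical partial sum projections
    (P : ℕ → X →L[ℂ] X)
    (hP : ∀ (x : X) (a : ℕ → X), (∀ n, a n ∈ E n) →
      Tendsto (fun N => ∑ n ∈ Finset.range N, a n) atTop (𝓝 x) →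
      ∀ N, P N x = ∑ n ∈ Finset.range N, a n)
    -- the FDD is shrinking: the adjoints `(P N)*` converge strongly to the identity on `X*`
    (hshrink : ∀ φ : X →L[ℂ] ℂ, Tendsto (fun N => ‖φ.comp (P N) - φ‖) atTop (𝓝 0))
    -- the FDD is reverse monotone: `‖I - P N‖ = 1`
    (hrevmono : ∀ N, ‖ContinuousLinearMap.id ℂ X - P N‖ = 1) :
    ∀ f : X → ℂ, MemAu X f →
      clusterSetZero X f =
        {z | ∃ τ : Character X (MemAu X), τ.inFiberZero ∧ τ.toFun f = z} := by
  classical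
  intro f hf
  ext z
  simp only [Set.mem_setOf_eq]
  constructor
  · intro hz
    exact ClusterValue.CVAux.cluster_to_char hf hz
  · rintro ⟨τ, hτ0, rfl⟩
    -- the key pointwise existence statement
    have hkey : ∀ ε : ℝ, 0 < ε → ∀ F : Finset (X →L[ℂ] ℂ),
        ∃ x, x ∈ ball (0:X) 1 ∧ ‖f x - τ.toFun f‖ ≤ ε ∧ ∀ φ ∈ F, ‖φ x‖ ≤ ε := by
      intro ε hε F
      have hev : ∀ᶠ N in atTop, ∀ φ ∈ F, ‖φ.comp (P N) - φ‖ < ε := by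
        rw [eventually_all_finset]
        intro φ _
        exact (hshrink φ).eventually (gt_mem_nhds hε)
      obtain ⟨N, hN⟩ := hev.exists
      set T : X →L[ℂ] X := ContinuousLinearMap.id ℂ X - P N with hT
      have hT1 : ∀ x, ‖T x‖ ≤ ‖x‖ := by
        intro x
        have h := T.le_opNorm x
        rwa [hT, hrevmono N, one_mul] at h
      obtain ⟨d, b, ψ, hdec⟩ := ClusterValue.CVAux.exists_coords hEfin hrep P hP N
      have hdecomp : ∀ x : X, x - T x = ∑ j, ψ j x • b j := by
        intro x
        have h1 : x - T x = P N x := by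
          rw [hT]
          simp [ContinuousLinearMap.sub_apply]
        rw [h1, hdec x]
      have hτT := ClusterValue.CVAux.char_comp_T τ hτ0 T hT1 b ψ hdecomp hf
      have hmemT : MemAu X (fun x => f (T x)) :=
        ClusterValue.CVAux.memAu_comp_clm hf T hT1
      obtain ⟨x', hx', hx'2⟩ := ClusterValue.CVAux.char_mem_closure τ _ hmemT hε
      have hx'n : ‖x'‖ < 1 := by rwa [mem_ball, dist_zero_right] at hx'
      refine ⟨T x', ?_, ?_, ?_⟩
      · rw [mem_ball, dist_zero_right]
        exact (hT1 x').trans_lt hx'n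
      · rw [← hτT]
        exact hx'2.le
      · intro φ hφ
        have hc : φ (T x') = -((φ.comp (P N) - φ) x') := by
          rw [hT]
          simp only [ContinuousLinearMap.sub_apply, ContinuousLinearMap.coe_comp',
            Function.comp_apply, ContinuousLinearMap.id_apply, map_sub]
          ring
        rw [hc, norm_neg]
        calc ‖(φ.comp (P N) - φ) x'‖ ≤ ‖φ.comp (P N) - φ‖ * ‖x'‖ :=
              ContinuousLinearMap.le_opNorm _ _
          _ ≤ ε * 1 := mul_le_mul (hN φ hφ).le hx'n.le (norm_nonneg _) hε.le
          _ = ε := mul_one ε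
    -- build the filter witnessing the cluster value
    set w : ℂ := τ.toFun f with hw
    set S : {p : ℝ × Finset (X →L[ℂ] ℂ) // 0 < p.1} → Set X := fun p =>
      {x | x ∈ ball (0:X) 1 ∧ ‖f x - w‖ ≤ p.1.1 ∧ ∀ φ ∈ p.1.2, ‖φ x‖ ≤ p.1.1} with hS
    have hSne : ∀ p, (S p).Nonempty := by
      rintro ⟨⟨ε, F⟩, hε⟩
      obtain ⟨x, h1, h2, h3⟩ := hkey ε hε F
      exact ⟨x, h1, h2, h3⟩
    haveI : Nonempty {p : ℝ × Finset (X →L[ℂ] ℂ) // 0 < p.1} := ⟨⟨(1, ∅), one_pos⟩⟩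
    set l : Filter X := ⨅ p, 𝓟 (S p) with hl
    have hdir : Directed (· ≥ ·) (fun p => 𝓟 (S p)) := by
      rintro ⟨⟨ε1, F1⟩, h1⟩ ⟨⟨ε2, F2⟩, h2⟩
      refine ⟨⟨(min ε1 ε2, F1 ∪ F2), lt_min h1 h2⟩, ?_, ?_⟩
      · refine principal_mono.mpr ?_
        rintro x ⟨hxb, hxf, hxφ⟩
        exact ⟨hxb, hxf.trans (min_le_left _ _),
          fun φ hφ => (hxφ φ (Finset.mem_union_left _ hφ)).trans (min_le_left _ _)⟩
      · refine principal_mono.mpr ?_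
        rintro x ⟨hxb, hxf, hxφ⟩
        exact ⟨hxb, hxf.trans (min_le_right _ _),
          fun φ hφ => (hxφ φ (Finset.mem_union_right _ hφ)).trans (min_le_right _ _)⟩
    haveI hlne : l.NeBot :=
      iInf_neBot_of_directed' hdir (fun p => principal_neBot_iff.mpr (hSne p))
    have hmemS : ∀ p, S p ∈ l := fun p => le_principal_iff.mp (iInf_le _ p)
    refine ⟨l, hlne, ?_, ?_, ?_⟩
    · refine le_trans (iInf_le _ ⟨(1, ∅), one_pos⟩) (principal_mono.mpr ?_)
      rintro x ⟨hxb, -, -⟩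
      exact hxb
    · intro φ
      rw [Metric.tendsto_nhds]
      intro ε hε
      filter_upwards [hmemS ⟨(ε/2, {φ}), by positivity⟩] with x hx
      rw [dist_zero_right]
      exact (hx.2.2 φ (Finset.mem_singleton_self φ)).trans_lt (by linarith)
    · rw [Metric.tendsto_nhds]
      intro ε hε
      filter_upwards [hmemS ⟨(ε/2, ∅), by positivity⟩] with x hx
      rw [dist_eq_norm]
      exact hx.2.1.trans_lt (by linarith)
end

section
/- Let X be a complex Banach space with open unit ball B, and let Y be a closed finite-codimensional subspace of X with unit ball B_Y. Then for every f ∈ A_u(B), the cluster set of f at 0 over B equals the cluster set of the restriction f|_Y at 0 over B_Y: Cl_B(f, 0) = Cl_{B_Y}(f|_Y, 0). -/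
open Metric Filter Topology

open Metric Filter Topology ClusterValue in
private lemma statement4_aux {X : Type*} [NormedAddCommGroup X] [NormedSpace ℂ X]
    (Y : Submodule ℂ X) (hYclosed : IsClosed (Y : Set X))
    (hYcodim : FiniteDimensional ℂ (X ⧸ Y))
    (f : X → ℂ)
    (hfu : UniformContinuousOn f (ball (0 : X) 1))
    (z : ℂ)
    (u : Filter X) (hu : u.NeBot) (hub : u ≤ 𝓟 (ball (0 : X) 1))
    (huw : ∀ φ : X →L[ℂ] ℂ, Tendsto (fun x => φ x) u (𝓝 0))
    (huf : Tendsto f u (𝓝 z)) :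
    ∃ l : Filter ↥Y, l.NeBot ∧ l ≤ 𝓟 (ball (0 : ↥Y) 1) ∧
      (∀ ψ : ↥Y →L[ℂ] ℂ, Tendsto (fun y => ψ y) l (𝓝 0)) ∧
      Tendsto (fun y : ↥Y => f ↑y) l (𝓝 z) := by
  haveI : IsClosed (Y : Set X) := hYclosed
  -- construct a continuous linear projection-ish map P with x - P x ∈ Y
  let b : Module.Basis (Fin (Module.finrank ℂ (X ⧸ Y))) ℂ (X ⧸ Y) := Module.finBasis ℂ (X ⧸ Y)
  let mkQc : X →L[ℂ] (X ⧸ Y) :=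
    LinearMap.mkContinuous Y.mkQ 1 (fun x => by
      simpa using Submodule.Quotient.norm_mk_le Y x)
  let φ : Fin (Module.finrank ℂ (X ⧸ Y)) → (X →L[ℂ] ℂ) :=
    fun i => (LinearMap.toContinuousLinearMap (b.coord i)).comp mkQc
  obtain ⟨v, hv⟩ := Classical.axiom_of_choice (fun i => Y.mkQ_surjective (b i))
  let P : X →L[ℂ] X := ∑ i, (φ i).smulRight (v i)
  have hPapply : ∀ x, P x = ∑ i, φ i x • v i := by
    intro x; simp [P]
  have hPmem : ∀ x : X, x - P x ∈ Y := by
    intro x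
    rw [← Submodule.Quotient.mk_eq_zero, ← Y.mkQ_apply, map_sub, hPapply, map_sum]
    have h1 : ∀ i, φ i x = b.repr (Y.mkQ x) i := by
      intro i; simp [φ, mkQc, Module.Basis.coord_apply, LinearMap.mkContinuous_apply]
    have : ∑ i, Y.mkQ (φ i x • v i) = ∑ i, (b.repr (Y.mkQ x) i) • b i := by
      refine Finset.sum_congr rfl fun i _ => ?_
      rw [map_smul, hv, h1]
    rw [this, b.sum_repr (Y.mkQ x), sub_self]
  -- P x → 0 along u
  have hP0 : Tendsto (fun x => P x) u (𝓝 0) := by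
    have : Tendsto (fun x => ∑ i, φ i x • v i) u (𝓝 (∑ i : Fin (Module.finrank ℂ (X ⧸ Y)), (0:ℂ) • v i)) :=
      tendsto_finset_sum _ fun i _ => (huw (φ i)).smul_const (v i)
    simpa [hPapply] using this
  have hPnorm : ∀ ε > (0:ℝ), ∀ᶠ x in u, ‖P x‖ < ε := by
    intro ε hε
    have := hP0.norm
    rw [norm_zero] at this
    exact this.eventually_lt_const hε
  have hball : ∀ᶠ x in u, ‖x‖ < 1 := by
    filter_upwards [le_principal_iff.mp hub] with x hx
    exact mem_ball_zero_iff.mp hx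
  -- uniform continuity moduli
  rw [Metric.uniformContinuousOn_iff] at hfu
  have hδ : ∀ n : ℕ, ∃ δ > (0:ℝ), ∀ x ∈ ball (0:X) 1, ∀ y ∈ ball (0:X) 1,
      dist x y < δ → dist (f x) (f y) < 1/(n+1) := fun n => hfu _ (by positivity)
  choose δ hδpos hδf using hδ
  set ε : ℕ → ℝ := fun n => min (δ n / 4) (1/(n+1)) with hεdef
  have hεpos : ∀ n, 0 < ε n := fun n => lt_min (by linarith [hδpos n]) (by positivity)
  have hεle1 : ∀ n, ε n ≤ 1 := by
    intro n
    refine (min_le_right _ _).trans ?_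
    rw [div_le_one (by positivity)]
    linarith [Nat.cast_nonneg (α := ℝ) n]
  -- the maps into Y
  let Q : X →L[ℂ] ↥Y := (ContinuousLinearMap.id ℂ X - P).codRestrict Y (by
    intro x; simpa using hPmem x)
  let c : ℕ → ℂ := fun n => ((1 - ε n : ℝ) : ℂ)
  have hcnorm : ∀ n, ‖c n‖ = 1 - ε n := by
    intro n
    simp only [c, Complex.norm_real, Real.norm_eq_abs]
    rw [abs_of_nonneg (by linarith [hεle1 n])]
  let T : ℕ → X → ↥Y := fun n x => c n • Q x
  have hTcoe : ∀ n x, ((T n x : X)) = c n • (x - P x) := by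
    intro n x
    simp [T, Q, ContinuousLinearMap.coe_codRestrict_apply, sub_smul]
  -- the limit filter
  refine ⟨(atTop : Filter ℕ).bind (fun n => Filter.map (T n) u), ?_, ?_, ?_, ?_⟩
  · -- NeBot
    refine Filter.forall_mem_nonempty_iff_neBot.mp ?_
    intro s hs
    rw [Filter.mem_bind'] at hs
    obtain ⟨n, hn⟩ := Filter.nonempty_of_mem hs
    exact (hu.map (T n)).nonempty_of_mem hn
  · -- in the ball
    rw [le_principal_iff, Filter.mem_bind']
    refine Filter.univ_mem' fun n => ?_
    simp only [Set.mem_setOf_eq, Filter.mem_map]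
    filter_upwards [hPnorm (ε n) (hεpos n), hball] with x hPx hx
    rw [Set.mem_preimage, mem_ball_zero_iff]
    have : ‖(T n x : X)‖ < 1 := by
      rw [hTcoe, norm_smul, hcnorm]
      have h1 : ‖x - P x‖ ≤ ‖x‖ + ‖P x‖ := norm_sub_le _ _
      nlinarith [hεpos n, hεle1 n, norm_nonneg (x - P x)]
    simpa [AddSubgroupClass.coe_norm] using this
  · -- weakly null
    intro ψ
    have htend : ∀ n, Tendsto (fun x => ψ (T n x)) u (𝓝 0) := by
      intro n
      have := huw (c n • (ψ.comp Q))
      refine this.congr fun x => ?_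
      simp [T, map_smul]
    intro s hs
    rw [Filter.mem_map, Filter.mem_bind']
    refine Filter.univ_mem' fun n => ?_
    simp only [Set.mem_setOf_eq, Filter.mem_map]
    exact htend n hs
  · -- f tends to z
    rw [Metric.tendsto_nhds]
    intro r hr
    obtain ⟨N, hN⟩ := exists_nat_one_div_lt (K := ℝ) (half_pos hr)
    have hufe := Metric.tendsto_nhds.mp huf (r/2) (half_pos hr)
    rw [Filter.eventually_iff, Filter.mem_bind']
    refine Filter.mem_atTop_sets.mpr ⟨N, fun n hn => ?_⟩
    simp only [Set.mem_setOf_eq, Filter.mem_map]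
    filter_upwards [hPnorm (ε n) (hεpos n), hball, hufe] with x h1 h2 h3
    simp only [Set.mem_preimage, Set.mem_setOf_eq]
    have hTball : ‖(T n x : X)‖ < 1 := by
      rw [hTcoe, norm_smul, hcnorm]
      have hsub : ‖x - P x‖ ≤ ‖x‖ + ‖P x‖ := norm_sub_le _ _
      nlinarith [hεpos n, hεle1 n, norm_nonneg (x - P x)]
    have hεδ : ε n ≤ δ n / 4 := min_le_left _ _
    have hdist : dist ((T n x : X)) x < δ n := by
      rw [dist_eq_norm, hTcoe]
      have hkey : c n • (x - P x) - x = (c n - 1) • x - c n • P x := by module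
      rw [hkey]
      have h4 : ‖(c n - 1) • x - c n • P x‖ ≤ ‖c n - 1‖ * ‖x‖ + ‖c n‖ * ‖P x‖ := by
        refine (norm_sub_le _ _).trans ?_
        rw [norm_smul, norm_smul]
      have h5 : ‖c n - 1‖ = ε n := by
        have : c n - 1 = ((-(ε n) : ℝ) : ℂ) := by simp only [c]; push_cast; ring
        rw [this, Complex.norm_real, Real.norm_eq_abs, abs_neg,
          abs_of_nonneg (hεpos n).le]
      rw [h5, hcnorm] at h4
      nlinarith [hεpos n, hεle1 n, norm_nonneg (P x), hδpos n]
    have hdf : dist (f ((T n x : X))) (f x) < 1/(n+1) :=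
      hδf n _ (mem_ball_zero_iff.mpr hTball) x (mem_ball_zero_iff.mpr h2) hdist
    have hle : (1:ℝ)/(n+1) ≤ 1/(N+1) := by
      apply one_div_le_one_div_of_le (by positivity)
      have : (N:ℝ) ≤ n := Nat.cast_le.mpr hn
      linarith
    calc dist (f ((T n x : X))) z ≤ dist (f ((T n x : X))) (f x) + dist (f x) z :=
          dist_triangle _ _ _
      _ < 1/(n+1) + r/2 := add_lt_add hdf h3
      _ ≤ 1/(N+1) + r/2 := by linarith
      _ < r/2 + r/2 := by linarith
      _ = r := by ring


open Metric Filter Topology ClusterValue in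
/-- If `Y` is a closed finite-codimensional subspace of `X` and `f ∈ A_u(B)`, then
`Cl_B(f, 0) = Cl_{B_Y}(f|_Y, 0)`. -/
theorem statement4 {X : Type*} [NormedAddCommGroup X] [NormedSpace ℂ X]
    (Y : Submodule ℂ X) (hYclosed : IsClosed (Y : Set X))
    (hYcodim : FiniteDimensional ℂ (X ⧸ Y))
    (f : X → ℂ) (hf : MemAu X f) :
    clusterSetZero X f = clusterSetZero ↥Y (fun y => f ↑y) := by
  obtain ⟨-, -, hfu⟩ := hf
  ext z
  simp only [clusterSetZero, Set.mem_setOf_eq]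
  constructor
  · rintro ⟨u, hu, hub, huw, huf⟩
    exact statement4_aux Y hYclosed hYcodim f hfu z u hu hub huw huf
  · rintro ⟨l, hl, hlb, hlw, hlf⟩
    refine ⟨Filter.map (Subtype.val) l, hl.map _, ?_, ?_, ?_⟩
    · rw [le_principal_iff, Filter.mem_map]
      filter_upwards [le_principal_iff.mp hlb] with y hy
      have := mem_ball_zero_iff.mp hy
      simp only [Set.mem_preimage, mem_ball_zero_iff]
      simpa [AddSubgroupClass.coe_norm] using this
    · intro φ
      rw [Filter.tendsto_map'_iff]
      exact hlw (φ.comp Y.subtypeL)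
    · rw [Filter.tendsto_map'_iff]
      exact hlf
end
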